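/- arXiv:1005.0859 — 4 statements merged into one kernel-verified Lean document; each statement's English description precedes it below -/
import Mathlib

section
/- Let E be a compact subset of ℂ with positive logarithmic capacity. Then there exists a constant C = C_E > 0, depending only on E, such that for every positive integer n and every polynomial P(z) = ∑_{k=0}^n a_k z^k of degree at most n, each coefficient satisfies |a_k| ≤ Cⁿ · max_{z∈E} |P(z)|. -/
open MeasureTheory Filter

/-- The (truncated) logarithmic potential of a measure on `ℂ`. -/
noncomputable def logPotential (μ : Measure ℂ) (z : ℂ) : EReal :=
  ⨆ N : ℕ, ((∫ ζ, min (N : ℝ) (Real.log (1 / ‖z - ζ‖)) ∂μ : ℝ) : EReal)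

/-- The Robin constant of `E`: the infimum, over probability measures supported
in `E`, of the supremum of the logarithmic potential. -/
noncomputable def robinConst (E : Set ℂ) : EReal :=
  ⨅ (μ : Measure ℂ) (_ : IsProbabilityMeasure μ) (_ : μ Eᶜ = 0), ⨆ z : ℂ, logPotential μ z

/-- Logarithmic capacity: `cap E = exp (-robinConst E)`. -/
noncomputable def logCap (E : Set ℂ) : ENNReal := EReal.exp (-(robinConst E))

section Aux
open Finset Function

lemma coeff_prod_bound {ι : Type*} (t : Finset ι) (c : ι → ℂ) (B : ℝ) (hB : 1 ≤ B)
    (hc : ∀ i ∈ t, ‖c i‖ ≤ B) (k : ℕ) :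
    ‖(∏ i ∈ t, (Polynomial.X - Polynomial.C (c i))).coeff k‖ ≤ (2 * B) ^ t.card := by
  classical
  induction t using Finset.induction_on generalizing k with
  | empty => simp [Polynomial.coeff_one]; split <;> simp [hB]
  | insert a t' ha ih =>
    have hc' : ∀ i ∈ t', ‖c i‖ ≤ B := fun i hi => hc i (Finset.mem_insert_of_mem hi)
    have hca : ‖c a‖ ≤ B := hc a (Finset.mem_insert_self a t')
    rw [Finset.prod_insert ha, Finset.card_insert_of_notMem ha]
    set q := ∏ i ∈ t', (Polynomial.X - Polynomial.C (c i)) with hq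
    have key : ∀ m, ‖((Polynomial.X - Polynomial.C (c a)) * q).coeff m‖ ≤ (2*B)^(t'.card + 1) := by
      intro m
      rw [mul_comm]
      have hBpos : (0:ℝ) < 2 * B := by linarith
      have hpow : (0:ℝ) ≤ (2*B)^t'.card := by positivity
      match m with
      | 0 =>
        have : (q * (Polynomial.X - Polynomial.C (c a))).coeff 0 = q.coeff 0 * (-(c a)) := by
          simp [Polynomial.mul_coeff_zero]
        rw [this, pow_succ]
        calc ‖q.coeff 0 * (-(c a))‖ = ‖q.coeff 0‖ * ‖c a‖ := by simp
        _ ≤ (2*B)^t'.card * (2*B) := by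
            apply mul_le_mul (ih hc' 0) (by linarith) (norm_nonneg _) hpow
      | (m+1) =>
        rw [Polynomial.coeff_mul_X_sub_C]
        calc ‖q.coeff m - q.coeff (m+1) * c a‖ ≤ ‖q.coeff m‖ + ‖q.coeff (m+1)‖ * ‖c a‖ := by
              refine (norm_sub_le _ _).trans ?_; simp
        _ ≤ (2*B)^t'.card + (2*B)^t'.card * B := by
            refine add_le_add (ih hc' m) ?_
            exact mul_le_mul (ih hc' (m+1)) hca (norm_nonneg _) hpow
        _ ≤ (2*B)^(t'.card+1) := by rw [pow_succ]; nlinarith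
    exact key k

noncomputable def Fprod {m : ℕ} (z : Fin m → ℂ) : ℝ :=
  ∏ i, ∏ k, (if i = k then (1:ℝ) else ‖z i - z k‖)

lemma Fprod_update {m : ℕ} (x : Fin m → ℂ) (j : Fin m) (y : ℂ) :
    Fprod (update x j y) =
      (∏ k ∈ ({j}ᶜ : Finset (Fin m)), ‖y - x k‖) ^ 2 *
        ∏ i ∈ ({j}ᶜ : Finset (Fin m)), ∏ k ∈ ({j}ᶜ : Finset (Fin m)),
          (if i = k then (1:ℝ) else ‖x i - x k‖) := by
  unfold Fprod
  rw [Fintype.prod_eq_mul_prod_compl j]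
  have h1 : ∏ k, (if j = k then (1:ℝ) else ‖update x j y j - update x j y k‖)
      = ∏ k ∈ ({j}ᶜ : Finset (Fin m)), ‖y - x k‖ := by
    rw [Fintype.prod_eq_mul_prod_compl j (fun k => if j = k then (1:ℝ) else ‖update x j y j - update x j y k‖)]
    simp only [if_pos trivial, eq_self_iff_true, if_true, one_mul]
    refine Finset.prod_congr rfl fun k hk => ?_
    have hkj : j ≠ k := fun h => by simp [h.symm] at hk
    rw [if_neg hkj, update_self, update_of_ne (Ne.symm hkj)]
  have h2 : ∏ i ∈ ({j}ᶜ : Finset (Fin m)), ∏ k, (if i = k then (1:ℝ) else ‖update x j y i - update x j y k‖)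
      = (∏ i ∈ ({j}ᶜ : Finset (Fin m)), ‖y - x i‖) *
        ∏ i ∈ ({j}ᶜ : Finset (Fin m)), ∏ k ∈ ({j}ᶜ : Finset (Fin m)),
          (if i = k then (1:ℝ) else ‖x i - x k‖) := by
    rw [← Finset.prod_mul_distrib]
    refine Finset.prod_congr rfl fun i hi => ?_
    have hij : i ≠ j := fun h => by simp [h] at hi
    rw [Fintype.prod_eq_mul_prod_compl j (fun k => if i = k then (1:ℝ) else ‖update x j y i - update x j y k‖)]
    congr 1
    · rw [if_neg hij, update_self, update_of_ne hij, norm_sub_rev]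
    · refine Finset.prod_congr rfl fun k hk => ?_
      have hkj : k ≠ j := fun h => by simp [h] at hk
      split
      · rfl
      · rw [update_of_ne hij, update_of_ne hkj]
  rw [h1, h2, sq]
  ring

lemma pot_real (μ : Measure ℂ) (M : ℝ) (z : ℂ) (h : logPotential μ z ≤ (M : EReal)) (N : ℕ) :
    -M ≤ ∫ ζ, max (-(N:ℝ)) (Real.log ‖z - ζ‖) ∂μ := by
  have h1 : ((∫ ζ, min (N : ℝ) (Real.log (1 / ‖z - ζ‖)) ∂μ : ℝ) : EReal) ≤ (M : EReal) :=
    le_trans (le_iSup (fun N : ℕ => ((∫ ζ, min (N : ℝ) (Real.log (1 / ‖z - ζ‖)) ∂μ : ℝ) : EReal)) N) h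
  have h2 : ∫ ζ, min (N : ℝ) (Real.log (1 / ‖z - ζ‖)) ∂μ ≤ M := EReal.coe_le_coe_iff.mp h1
  have h3 : (fun ζ => min (N : ℝ) (Real.log (1 / ‖z - ζ‖)))
      = fun ζ => -(max (-(N:ℝ)) (Real.log ‖z - ζ‖)) := by
    funext ζ
    rw [one_div, Real.log_inv, ← min_neg_neg, neg_neg]
  rw [h3, integral_neg] at h2
  linarith

lemma mble_maxlog (z : ℂ) (N : ℝ) :
    Measurable (fun ζ : ℂ => max (-N) (Real.log ‖z - ζ‖)) :=
  measurable_const.max (Real.measurable_log.comp ((continuous_const.sub continuous_id).norm).measurable)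

lemma integrable_maxlog (μ : Measure ℂ) [IsProbabilityMeasure μ] (E : Set ℂ) (hEc : μ Eᶜ = 0)
    (z : ℂ) (N L : ℝ) (hN : 0 ≤ N) (hL : 0 ≤ L)
    (hD : ∀ ζ ∈ E, Real.log ‖z - ζ‖ ≤ L) :
    Integrable (fun ζ : ℂ => max (-N) (Real.log ‖z - ζ‖)) μ := by
  have aeE : ∀ᵐ ζ ∂μ, ζ ∈ E := by
    rw [ae_iff]; exact hEc
  refine ⟨(mble_maxlog z N).aestronglyMeasurable, HasFiniteIntegral.of_bounded (C := N + L) ?_⟩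
  filter_upwards [aeE] with ζ hζ
  rw [Real.norm_eq_abs, abs_le]
  constructor
  · have := le_max_left (-N) (Real.log ‖z - ζ‖); linarith
  · exact max_le (by linarith) (by have := hD ζ hζ; linarith)

lemma sum_max_le {ι : Type*} [DecidableEq ι] (s : Finset ι) (a : ι → ℝ) (L N : ℝ)
    (hL : 0 ≤ L) (hN : 0 ≤ N) (ha : ∀ i ∈ s, a i ≤ L) :
    ∑ i ∈ s, max (-N) (a i) ≤ max (-(N - s.card * L)) (∑ i ∈ s, a i) := by
  by_cases h : ∀ i ∈ s, -N ≤ a i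
  · calc ∑ i ∈ s, max (-N) (a i) = ∑ i ∈ s, a i := by
          exact Finset.sum_congr rfl fun i hi => max_eq_right (h i hi)
    _ ≤ _ := le_max_right _ _
  · push_neg at h
    obtain ⟨k, hk, hak⟩ := h
    refine le_trans ?_ (le_max_left _ _)
    rw [← Finset.add_sum_erase _ _ hk]
    have h1 : max (-N) (a k) = -N := max_eq_left hak.le
    have h2 : ∑ i ∈ s.erase k, max (-N) (a i) ≤ ∑ i ∈ s.erase k, L :=
      Finset.sum_le_sum fun i hi => max_le (by linarith) (ha i (Finset.mem_of_mem_erase hi))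
    rw [Finset.sum_const] at h2
    have h3 : ((s.erase k).card : ℝ) ≤ s.card := by
      exact_mod_cast Finset.card_le_card (Finset.erase_subset _ _)
    have := mul_le_mul_of_nonneg_right h3 hL
    rw [h1]
    simp only [nsmul_eq_mul] at h2
    linarith

lemma frostman (μ : Measure ℂ) [IsProbabilityMeasure μ] (E : Set ℂ) (hEc : μ Eᶜ = 0)
    (hatom : ∀ a : ℂ, μ {a} = 0) (M L : ℝ) (hL : 0 ≤ L)
    (hM : ∀ z : ℂ, logPotential μ z ≤ (M : EReal))
    {ι : Type} [DecidableEq ι] (x : ι → ℂ) (s : Finset ι)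
    (hD : ∀ ζ ∈ E, ∀ i ∈ s, Real.log ‖x i - ζ‖ ≤ L)
    (d : ℝ) (hd : 0 < d)
    (hdle : ∀ ζ ∈ E, ∏ i ∈ s, ‖x i - ζ‖ ≤ d) :
    Real.exp (-(s.card * M)) ≤ d := by
  have aeE : ∀ᵐ ζ ∂μ, ζ ∈ E := by rw [ae_iff]; exact hEc
  have aene : ∀ᵐ ζ ∂μ, ∀ i ∈ (s : Set ι), ζ ≠ x i := by
    rw [MeasureTheory.ae_ball_iff s.countable_toSet]
    intro i _
    rw [ae_iff]
    have : {a : ℂ | ¬ a ≠ x i} = {x i} := by ext a; simp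
    rw [this]; exact hatom _
  have key : ∀ N : ℕ, -(s.card * M) ≤ max (-((N:ℝ) - s.card * L)) (Real.log d) := by
    intro N
    have int_g : ∀ i ∈ s, Integrable (fun ζ : ℂ => max (-(N:ℝ)) (Real.log ‖x i - ζ‖)) μ :=
      fun i hi => integrable_maxlog μ E hEc (x i) N L (by positivity) hL
        (fun ζ hζ => hD ζ hζ i hi)
    have step1 : -(↑s.card * M) ≤ ∑ i ∈ s, ∫ ζ, max (-(N:ℝ)) (Real.log ‖x i - ζ‖) ∂μ := by
      have : ∑ i ∈ s, (-M) ≤ ∑ i ∈ s, ∫ ζ, max (-(N:ℝ)) (Real.log ‖x i - ζ‖) ∂μ :=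
        Finset.sum_le_sum fun i hi => pot_real μ M (x i) (hM (x i)) N
      simpa [Finset.sum_const, nsmul_eq_mul, mul_neg] using this
    have step2 : ∑ i ∈ s, ∫ ζ, max (-(N:ℝ)) (Real.log ‖x i - ζ‖) ∂μ
        = ∫ ζ, ∑ i ∈ s, max (-(N:ℝ)) (Real.log ‖x i - ζ‖) ∂μ :=
      (integral_finset_sum s int_g).symm
    have step3 : ∫ ζ, ∑ i ∈ s, max (-(N:ℝ)) (Real.log ‖x i - ζ‖) ∂μ
        ≤ max (-((N:ℝ) - s.card * L)) (Real.log d) := by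
      have hint : Integrable (fun ζ => ∑ i ∈ s, max (-(N:ℝ)) (Real.log ‖x i - ζ‖)) μ :=
        integrable_finset_sum s int_g
      calc ∫ ζ, ∑ i ∈ s, max (-(N:ℝ)) (Real.log ‖x i - ζ‖) ∂μ
          ≤ ∫ _, max (-((N:ℝ) - s.card * L)) (Real.log d) ∂μ := by
            refine integral_mono_ae hint (integrable_const _) ?_
            filter_upwards [aeE, aene] with ζ hζE hζne
            refine le_trans (sum_max_le s (fun i => Real.log ‖x i - ζ‖) L N hL (by positivity)
              (fun i hi => hD ζ hζE i hi)) ?_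
            refine max_le_max le_rfl ?_
            have hne : ∀ i ∈ s, ‖x i - ζ‖ ≠ 0 := fun i hi =>
              norm_ne_zero_iff.mpr (sub_ne_zero.mpr fun h => (hζne i (Finset.mem_coe.mpr hi)) h.symm)
            rw [← Real.log_prod hne]
            have hpos : 0 < ∏ i ∈ s, ‖x i - ζ‖ :=
              Finset.prod_pos fun i hi => lt_of_le_of_ne (norm_nonneg _) (Ne.symm (hne i hi))
            exact Real.log_le_log hpos (hdle ζ hζE)
      _ = max (-((N:ℝ) - s.card * L)) (Real.log d) := by simp
    linarith [step1, step2 ▸ step1, step3]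
  by_contra hcon
  push_neg at hcon
  have hlogd : Real.log d < -(s.card * M) := by
    have := Real.log_lt_log hd hcon
    rwa [Real.log_exp] at this
  set N : ℕ := ⌈(s.card : ℝ) * L + s.card * M⌉₊ + 1 with hN
  have hNge : (s.card : ℝ) * L + s.card * M < N := by
    have := Nat.le_ceil ((s.card : ℝ) * L + s.card * M)
    push_cast [hN]
    linarith
  have h1 : -((N:ℝ) - s.card * L) < -(s.card * M) := by linarith
  have := key N
  rcases max_cases (-((N:ℝ) - s.card * L)) (Real.log d) with ⟨he, _⟩ | ⟨he, _⟩ <;>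
    rw [he] at this <;> linarith

lemma no_atoms (μ : Measure ℂ) [IsProbabilityMeasure μ] (E : Set ℂ) (hEc : μ Eᶜ = 0)
    (R : ℝ) (hR : 0 ≤ R) (hRE : ∀ ζ ∈ E, ‖ζ‖ ≤ R) (M : ℝ)
    (hM : ∀ z : ℂ, logPotential μ z ≤ (M : EReal)) (a : ℂ) : μ {a} = 0 := by
  by_contra h
  have haE : a ∈ E := by
    by_contra haE
    exact h (le_antisymm (le_trans (measure_mono (by simpa using haE)) hEc.le) (zero_le))
  have hc : 0 < (μ {a}).toReal :=
    ENNReal.toReal_pos h (measure_ne_top μ _)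
  set c := (μ {a}).toReal with hcdef
  have hc1 : c ≤ 1 := by
    rw [hcdef, ← ENNReal.toReal_one]
    exact ENNReal.toReal_mono (by simp) prob_le_one
  set D : ℝ := 2*R + 2 with hD
  have hD1 : 1 ≤ D := by linarith
  set L : ℝ := Real.log D with hLdef
  have hL : 0 ≤ L := Real.log_nonneg hD1
  set β : ℝ := max (M + L + 1) 0 with hβ
  have hβ0 : 0 ≤ β := le_max_right _ _
  set r : ℝ := Real.exp (-(β/c)) with hr
  have hr0 : 0 < r := Real.exp_pos _
  have hr1 : r ≤ 1 := Real.exp_le_one_iff.mpr (neg_nonpos.mpr (by positivity))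
  set z : ℂ := a + (r : ℂ) with hz
  have hza : ‖z - a‖ = r := by
    rw [hz]; simp [Complex.norm_real, abs_of_pos hr0]
  have hlogr : Real.log (1/r) = β / c := by
    rw [one_div, Real.log_inv, hr, Real.log_exp, neg_neg]
  set N : ℕ := ⌈β/c⌉₊ with hN
  have hNge : β/c ≤ (N:ℝ) := Nat.le_ceil _
  -- the key distance bound
  have hdist : ∀ ζ ∈ E, ‖z - ζ‖ ≤ D := by
    intro ζ hζ
    calc ‖z - ζ‖ = ‖(a - ζ) + (r:ℂ)‖ := by rw [hz]; ring_nf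
    _ ≤ ‖a - ζ‖ + ‖(r:ℂ)‖ := norm_add_le _ _
    _ ≤ (‖a‖ + ‖ζ‖) + r := by
        rw [Complex.norm_real, Real.norm_eq_abs, abs_of_pos hr0]
        exact add_le_add_left (norm_sub_le _ _) r
    _ ≤ (R + R) + 1 := by
        have := hRE a haE; have := hRE ζ hζ; linarith
    _ ≤ D := by linarith
  have aeE : ∀ᵐ ζ ∂μ, ζ ∈ E := by rw [ae_iff]; exact hEc
  -- lower bound function
  set κ : ℝ := β/c + L with hκ
  have hκ0 : 0 ≤ κ := by positivity
  set g : ℂ → ℝ := fun ζ => Set.indicator {a} (fun _ => κ) ζ + (-L) with hg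
  set f : ℂ → ℝ := fun ζ => min (N:ℝ) (Real.log (1 / ‖z - ζ‖)) with hf
  have hlogr2 : -Real.log r = β / c := by rw [hr, Real.log_exp, neg_neg]
  have hfg : ∀ ζ ∈ E, g ζ ≤ f ζ := by
    intro ζ hζ
    have hflog : f ζ = min (N:ℝ) (-Real.log ‖z - ζ‖) := by
      rw [hf]; simp [one_div, Real.log_inv]
    by_cases hζa : ζ = a
    · have hgval : g ζ = κ + -L := by
        rw [hg]
        simp only
        rw [Set.indicator_of_mem (by simp [hζa]) (fun _ => κ)]
      rw [hgval, hflog]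
      rw [hζa, hza, hlogr2, min_eq_right hNge, hκ]
      linarith
    · have hgval : g ζ = -L := by
        rw [hg]
        simp only
        rw [Set.indicator_of_notMem (by simpa using hζa) (fun _ => κ)]
        ring
      rw [hgval, hflog]
      have hub : Real.log ‖z - ζ‖ ≤ L := by
        rcases eq_or_lt_of_le (norm_nonneg (z - ζ)) with h0 | h0
        · rw [← h0, Real.log_zero]; exact hL
        · exact Real.log_le_log h0 (hdist ζ hζ)
      have hN0 : (0:ℝ) ≤ N := Nat.cast_nonneg _
      exact le_min (by linarith) (by linarith)
  -- integrability of f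
  have hmf : Measurable f := by
    apply measurable_const.min
    simp only [one_div]
    exact Real.measurable_log.comp ((continuous_const.sub continuous_id).norm.measurable.inv)
  have hgL : ∀ ζ, -L ≤ g ζ := by
    intro ζ
    rw [hg]
    simp only
    have : 0 ≤ Set.indicator {a} (fun _ => κ) ζ :=
      Set.indicator_nonneg (fun _ _ => hκ0) ζ
    linarith
  have hfN : ∀ ζ, f ζ ≤ N := fun ζ => min_le_left _ _
  have int_f : Integrable f μ := by
    refine ⟨hmf.aestronglyMeasurable, HasFiniteIntegral.of_bounded (C := (N:ℝ) + L) ?_⟩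
    filter_upwards [aeE] with ζ hζ
    rw [Real.norm_eq_abs, abs_le]
    have h1 := hfg ζ hζ
    have h2 := hgL ζ
    have h3 := hfN ζ
    constructor <;> [linarith; linarith [Nat.cast_nonneg (α := ℝ) N]]
  have int_ind : Integrable (fun ζ => Set.indicator {a} (fun _ => κ) ζ) μ :=
    (integrable_const κ).indicator (measurableSet_singleton a)
  have int_g : Integrable g μ := int_ind.add (integrable_const (-L))
  have hgint : ∫ ζ, g ζ ∂μ = c * κ - L := by
    rw [hg]
    rw [integral_add int_ind (integrable_const (-L))]
    rw [integral_indicator_const _ (measurableSet_singleton a), integral_const]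
    simp [hcdef, smul_eq_mul, Measure.real]
    ring
  have hle1 : ∫ ζ, g ζ ∂μ ≤ ∫ ζ, f ζ ∂μ := by
    refine integral_mono_ae int_g int_f ?_
    filter_upwards [aeE] with ζ hζ using hfg ζ hζ
  have hle2 : ∫ ζ, f ζ ∂μ ≤ M := by
    have h1 : ((∫ ζ, min (N : ℝ) (Real.log (1 / ‖z - ζ‖)) ∂μ : ℝ) : EReal) ≤ (M : EReal) :=
      le_trans (le_iSup (fun N : ℕ =>
        ((∫ ζ, min (N : ℝ) (Real.log (1 / ‖z - ζ‖)) ∂μ : ℝ) : EReal)) N) (hM z)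
    exact EReal.coe_le_coe_iff.mp h1
  have hck : c * κ = β + c * L := by
    rw [hκ, mul_add, mul_div_cancel₀ _ (ne_of_gt hc)]
  have hβM : M + L + 1 ≤ β := le_max_left _ _
  have hcL : 0 ≤ c * L := by positivity
  linarith

lemma basis_decomp {ι : Type*} [DecidableEq ι] (s : Finset ι) (v : ι → ℂ) (i : ι) :
    Lagrange.basis s v i =
      Polynomial.C (∏ j ∈ s.erase i, (v i - v j)⁻¹) *
        ∏ j ∈ s.erase i, (Polynomial.X - Polynomial.C (v j)) := by
  rw [Lagrange.basis]
  simp_rw [Lagrange.basisDivisor]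
  rw [Finset.prod_mul_distrib, ← map_prod]

end Aux

section Main
open Finset Function

/-- Bernstein inequality: if `E` is compact with positive capacity, there is
`C = C_E > 0` such that every polynomial `P` of degree at most `n` (for every
positive integer `n`) has all its coefficients bounded by `C^n · max_E |P|`. -/
theorem bernstein_inequality (E : Set ℂ) (hE : IsCompact E) (hcap : 0 < logCap E) :
    ∃ C : ℝ, 0 < C ∧ ∀ n : ℕ, 0 < n → ∀ P : Polynomial ℂ, P.natDegree ≤ n →
      ∀ k : ℕ, ‖P.coeff k‖ ≤ C ^ n * sSup ((fun z => ‖P.eval z‖) '' E) := by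
  classical
  -- extract an equilibrium-type measure with bounded potential
  have h0 : ⊥ < -(robinConst E) := EReal.zero_lt_exp_iff.mp hcap
  have hrc : robinConst E < ⊤ := by
    rcases lt_or_ge (robinConst E) ⊤ with h | h
    · exact h
    · exfalso
      have : robinConst E = ⊤ := top_le_iff.mp h
      rw [this] at h0
      simp at h0
  rw [robinConst] at hrc
  obtain ⟨μ, hμ⟩ := iInf_lt_iff.mp hrc
  obtain ⟨hprob, h3⟩ := iInf_lt_iff.mp hμ
  obtain ⟨hsupp, h4⟩ := iInf_lt_iff.mp h3
  obtain ⟨M, hM1, -⟩ := EReal.exists_between_coe_real h4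
  have hM : ∀ z : ℂ, logPotential μ z ≤ (M : EReal) := fun z =>
    le_trans (le_iSup (fun z => logPotential μ z) z) hM1.le
  haveI := hprob
  -- boundedness of E
  obtain ⟨R0, hR0⟩ := hE.isBounded.subset_closedBall (0 : ℂ)
  set R : ℝ := max R0 0 with hRdef
  have hR : 0 ≤ R := le_max_right _ _
  have hRE : ∀ ζ ∈ E, ‖ζ‖ ≤ R := fun ζ hζ =>
    le_trans (mem_closedBall_zero_iff.mp (hR0 hζ)) (le_max_left _ _)
  -- no atoms
  have hatom : ∀ a : ℂ, μ {a} = 0 := no_atoms μ E hsupp R hR hRE M hM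
  haveI : NullSingletonClass μ := ⟨hatom⟩
  -- E is nonempty and infinite
  have hEne : E.Nonempty := by
    rw [Set.nonempty_iff_ne_empty]
    rintro rfl
    rw [Set.compl_empty] at hsupp
    rw [measure_univ] at hsupp
    simp at hsupp
  have hEinf : E.Infinite := by
    by_contra hfin
    rw [Set.not_infinite] at hfin
    have h5 : μ E = 0 := hfin.countable.measure_zero μ
    have h6 : (1 : ENNReal) ≤ 0 := by
      calc (1 : ENNReal) = μ Set.univ := measure_univ.symm
      _ = μ (E ∪ Eᶜ) := by rw [Set.union_compl_self]
      _ ≤ μ E + μ Eᶜ := measure_union_le _ _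
      _ = 0 := by rw [h5, hsupp, add_zero]
    simp at h6
  -- constants
  set D : ℝ := 2 * R + 2 with hDdef
  have hD1 : (1:ℝ) ≤ D := by linarith
  set L : ℝ := Real.log D with hLdef
  have hL : 0 ≤ L := Real.log_nonneg hD1
  set B : ℝ := R + 1 with hBdef
  have hB1 : (1:ℝ) ≤ B := by linarith
  set M' : ℝ := max M 0 with hM'def
  have hM'0 : 0 ≤ M' := le_max_right _ _
  refine ⟨4 * B * Real.exp M', by positivity, ?_⟩
  intro n hn P hPn k
  -- the sup of |P| over E
  set S : ℝ := sSup ((fun z => ‖P.eval z‖) '' E) with hSdef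
  have himg : IsCompact ((fun z => ‖P.eval z‖) '' E) := hE.image (P.continuous.norm)
  have hSub : ∀ w ∈ E, ‖P.eval w‖ ≤ S := fun w hw => le_csSup himg.bddAbove ⟨w, hw, rfl⟩
  have hS0 : 0 ≤ S := by
    obtain ⟨w0, hw0⟩ := hEne
    exact le_trans (norm_nonneg _) (hSub w0 hw0)
  -- an injective tuple in E
  set e := hEinf.natEmbedding with hedef
  set x0 : Fin (n+1) → ℂ := fun i => (e i.val : ℂ) with hx0def
  have hx0E : ∀ i, x0 i ∈ E := fun i => (e i.val).2
  have hx0inj : Function.Injective x0 := by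
    intro i j hij
    have := e.injective (Subtype.coe_injective hij)
    exact Fin.val_injective this
  -- Fekete points: maximize Fprod over E^(n+1)
  set K : Set (Fin (n+1) → ℂ) := Set.univ.pi (fun _ => E) with hKdef
  have hKc : IsCompact K := isCompact_univ_pi (fun _ => hE)
  have hmemK : ∀ (y : Fin (n+1) → ℂ), (∀ i, y i ∈ E) → y ∈ K := by
    intro y hy
    rw [hKdef, Set.mem_univ_pi]
    exact fun i => hy i
  have hmemK' : ∀ y ∈ K, ∀ i, y i ∈ E := by
    intro y hy i
    rw [hKdef, Set.mem_univ_pi] at hy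
    exact hy i
  have hFcont : Continuous (Fprod (m := n+1)) := by
    apply continuous_finset_prod
    intro i _
    apply continuous_finset_prod
    intro j _
    by_cases hij : i = j
    · simp only [if_pos hij]
      exact continuous_const
    · simp only [if_neg hij]
      exact ((continuous_apply i).sub (continuous_apply j)).norm
  obtain ⟨x, hxK, hmax⟩ := hKc.exists_isMaxOn ⟨x0, hmemK x0 hx0E⟩ hFcont.continuousOn
  have hxE : ∀ i, x i ∈ E := hmemK' x hxK
  have hFx0 : 0 < Fprod x0 := by
    apply Finset.prod_pos
    intro i _
    apply Finset.prod_pos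
    intro j _
    by_cases hij : i = j
    · simp [hij]
    · rw [if_neg hij]
      exact norm_pos_iff.mpr (sub_ne_zero.mpr (fun h => hij (hx0inj h)))
  have hFx : 0 < Fprod x := lt_of_lt_of_le hFx0 (hmax (hmemK x0 hx0E))
  have hxinj : Function.Injective x := by
    intro i j hij
    by_contra hne
    have : Fprod x = 0 := by
      apply Finset.prod_eq_zero (Finset.mem_univ i)
      apply Finset.prod_eq_zero (Finset.mem_univ j)
      rw [if_neg hne, hij, sub_self, norm_zero]
    rw [this] at hFx
    exact lt_irrefl _ hFx
  -- the Fekete denominators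
  set d : Fin (n+1) → ℝ := fun j => ∏ i ∈ ({j}ᶜ : Finset (Fin (n+1))), ‖x j - x i‖ with hddef
  have hd0 : ∀ j, 0 < d j := by
    intro j
    apply Finset.prod_pos
    intro i hi
    have : i ≠ j := by simpa using hi
    exact norm_pos_iff.mpr (sub_ne_zero.mpr (fun h => this (hxinj h.symm)))
  have hQle : ∀ j, ∀ y ∈ E, (∏ i ∈ ({j}ᶜ : Finset (Fin (n+1))), ‖y - x i‖) ≤ d j := by
    intro j y hy
    set G : ℝ := ∏ i ∈ ({j}ᶜ : Finset (Fin (n+1))), ∏ l ∈ ({j}ᶜ : Finset (Fin (n+1))),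
      (if i = l then (1:ℝ) else ‖x i - x l‖) with hGdef
    have hupd : Fprod (update x j y) = (∏ i ∈ ({j}ᶜ : Finset (Fin (n+1))), ‖y - x i‖)^2 * G :=
      Fprod_update x j y
    have hx' : Fprod x = (d j)^2 * G := by
      have := Fprod_update x j (x j)
      rwa [Function.update_eq_self] at this
    have hle : Fprod (update x j y) ≤ Fprod x := by
      apply hmax
      apply hmemK
      intro i
      by_cases hijy : i = j
      · rw [hijy, Function.update_self]; exact hy
      · rw [Function.update_of_ne hijy]; exact hxE i
    rw [hupd, hx'] at hle
    have hG0 : 0 < G := by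
      by_contra hG
      push_neg at hG
      have : Fprod x ≤ 0 := by
        rw [hx']
        have h1 : 0 ≤ (d j)^2 := sq_nonneg _
        nlinarith
      linarith
    have hQnn : 0 ≤ ∏ i ∈ ({j}ᶜ : Finset (Fin (n+1))), ‖y - x i‖ :=
      Finset.prod_nonneg (fun i _ => norm_nonneg _)
    have h2 : (∏ i ∈ ({j}ᶜ : Finset (Fin (n+1))), ‖y - x i‖)^2 ≤ (d j)^2 :=
      le_of_mul_le_mul_right hle hG0
    nlinarith [h2, hQnn, hd0 j]
  -- the capacity lower bound for the denominators
  have hdlow : ∀ j, Real.exp (-(n * M)) ≤ d j := by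
    intro j
    have hcard : ({j}ᶜ : Finset (Fin (n+1))).card = n := by
      simp [Finset.card_compl]
    have hD2 : ∀ ζ ∈ E, ∀ i ∈ ({j}ᶜ : Finset (Fin (n+1))), Real.log ‖x i - ζ‖ ≤ L := by
      intro ζ hζ i _
      have hle : ‖x i - ζ‖ ≤ D := by
        have h1 := hRE (x i) (hxE i)
        have h2 := hRE ζ hζ
        calc ‖x i - ζ‖ ≤ ‖x i‖ + ‖ζ‖ := norm_sub_le _ _
        _ ≤ D := by rw [hDdef]; linarith
      rcases eq_or_lt_of_le (norm_nonneg (x i - ζ)) with h0 | h0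
      · rw [← h0, Real.log_zero]; exact hL
      · exact Real.log_le_log h0 hle
    have hdle : ∀ ζ ∈ E, ∏ i ∈ ({j}ᶜ : Finset (Fin (n+1))), ‖x i - ζ‖ ≤ d j := by
      intro ζ hζ
      have : ∏ i ∈ ({j}ᶜ : Finset (Fin (n+1))), ‖x i - ζ‖
          = ∏ i ∈ ({j}ᶜ : Finset (Fin (n+1))), ‖ζ - x i‖ :=
        Finset.prod_congr rfl (fun i _ => norm_sub_rev _ _)
      rw [this]
      exact hQle j ζ hζ
    have := frostman μ E hsupp hatom M L hL hM x ({j}ᶜ : Finset (Fin (n+1))) hD2 (d j) (hd0 j) hdle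
    rwa [hcard] at this
  -- Lagrange interpolation
  have hinj : Set.InjOn x ↑(Finset.univ : Finset (Fin (n+1))) := fun a _ b _ h => hxinj h
  have hdeg : P.degree < (Finset.univ : Finset (Fin (n+1))).card := by
    rw [Finset.card_univ, Fintype.card_fin]
    refine lt_of_le_of_lt (Polynomial.degree_le_natDegree) ?_
    exact_mod_cast Nat.lt_succ_of_le hPn
  have hP : P = Lagrange.interpolate Finset.univ x (fun i => P.eval (x i)) :=
    (Lagrange.eq_interpolate hinj hdeg)
  have hcoeff : P.coeff k = ∑ i : Fin (n+1), P.eval (x i) * (Lagrange.basis Finset.univ x i).coeff k := by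
    conv_lhs => rw [hP]
    rw [Lagrange.interpolate_apply, Polynomial.finset_sum_coeff]
    exact Finset.sum_congr rfl (fun i _ => by rw [Polynomial.coeff_C_mul])
  -- bound each term
  have hterm : ∀ i : Fin (n+1),
      ‖P.eval (x i) * (Lagrange.basis Finset.univ x i).coeff k‖
        ≤ S * (Real.exp (n * M') * (2 * B) ^ n) := by
    intro i
    have hcarde : ((Finset.univ : Finset (Fin (n+1))).erase i).card = n := by
      rw [Finset.card_erase_of_mem (Finset.mem_univ i), Finset.card_univ, Fintype.card_fin]
      simp
    have herase : (Finset.univ : Finset (Fin (n+1))).erase i = ({i}ᶜ : Finset (Fin (n+1))) := by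
      rw [Finset.compl_singleton]
    have hbc : (Lagrange.basis Finset.univ x i).coeff k
        = (∏ j ∈ (Finset.univ : Finset (Fin (n+1))).erase i, (x i - x j)⁻¹) *
          (∏ j ∈ (Finset.univ : Finset (Fin (n+1))).erase i,
            (Polynomial.X - Polynomial.C (x j))).coeff k := by
      rw [basis_decomp, Polynomial.coeff_C_mul]
    have hnorminv : ‖∏ j ∈ (Finset.univ : Finset (Fin (n+1))).erase i, (x i - x j)⁻¹‖
        = (d i)⁻¹ := by
      rw [norm_prod]
      rw [hddef]
      simp only
      rw [← Finset.prod_inv_distrib, herase]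
      exact Finset.prod_congr rfl (fun j _ => norm_inv _)
    have hinvle : (d i)⁻¹ ≤ Real.exp (n * M') := by
      have h1 : Real.exp (-(n * M')) ≤ d i := by
        refine le_trans ?_ (hdlow i)
        apply Real.exp_le_exp.mpr
        have : M ≤ M' := le_max_left _ _
        have hn0 : (0:ℝ) ≤ n := Nat.cast_nonneg _
        nlinarith
      rw [Real.exp_neg] at h1
      calc (d i)⁻¹ ≤ ((Real.exp (n * M'))⁻¹)⁻¹ := by
            apply inv_anti₀ (by positivity) h1
      _ = Real.exp (n * M') := inv_inv _
    have hprodbd : ‖(∏ j ∈ (Finset.univ : Finset (Fin (n+1))).erase i,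
        (Polynomial.X - Polynomial.C (x j))).coeff k‖ ≤ (2 * B) ^ n := by
      have := coeff_prod_bound ((Finset.univ : Finset (Fin (n+1))).erase i) x B hB1
        (fun j _ => by have := hRE (x j) (hxE j); rw [hBdef]; linarith) k
      rwa [hcarde] at this
    calc ‖P.eval (x i) * (Lagrange.basis Finset.univ x i).coeff k‖
        = ‖P.eval (x i)‖ * ‖(Lagrange.basis Finset.univ x i).coeff k‖ := norm_mul _ _
    _ ≤ S * (Real.exp (n * M') * (2 * B) ^ n) := by
        apply mul_le_mul (hSub (x i) (hxE i)) ?_ (norm_nonneg _) hS0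
        rw [hbc, norm_mul, hnorminv]
        apply mul_le_mul hinvle hprodbd (norm_nonneg _) (by positivity)
  -- final assembly
  have hfinal : ‖P.coeff k‖ ≤ (n+1) * (S * (Real.exp (n * M') * (2 * B) ^ n)) := by
    rw [hcoeff]
    refine le_trans (norm_sum_le _ _) ?_
    refine le_trans (Finset.sum_le_sum (fun i _ => hterm i)) ?_
    rw [Finset.sum_const, Finset.card_univ, Fintype.card_fin, nsmul_eq_mul]
    push_cast
    exact le_refl _
  have h2pow : ((n:ℝ)+1) ≤ 2^n := by exact_mod_cast Nat.lt_two_pow_self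
  calc ‖P.coeff k‖ ≤ ((n:ℝ)+1) * (S * (Real.exp (n * M') * (2 * B) ^ n)) := hfinal
  _ ≤ 2^n * (S * (Real.exp (n * M') * (2 * B) ^ n)) :=
      mul_le_mul_of_nonneg_right h2pow (by positivity)
  _ = (4 * B * Real.exp M')^n * S := by
      rw [Real.exp_nat_mul]
      have harg : ((4:ℝ) * B * Real.exp M')^n = 2^n * ((2*B)^n * (Real.exp M')^n) := by
        rw [← mul_pow, ← mul_pow]
        congr 1
        ring
      rw [harg]
      ring


end Main
end

section
/- Let P(t,y) = y^m + a₁(t)y^{m−1} + ⋯ + a_m(t) be a monic polynomial in y whose coefficients a_j(t) are convergent power series in t, and let h(t) be a formal power series with P(t, h(t)) = 0 in ℂ[[t]]. Then h(t) is convergent. -/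
/-- Convergence of a one-variable formal power series: geometric coefficient
bounds (equivalently, positive radius of convergence). -/
def ConvPS (h : PowerSeries ℂ) : Prop :=
  ∃ C : ℝ, ∀ p : ℕ, p ≠ 0 → ‖PowerSeries.coeff (R := ℂ) p h‖ ≤ C ^ p

-- Auxiliary development

namespace RootConv

/-- weight `1/(n+1)^2` -/
noncomputable def w (n : ℕ) : ℝ := (((n : ℝ) + 1) ^ 2)⁻¹

lemma w_pos (n : ℕ) : 0 < w n := by
  have : (0:ℝ) < ((n:ℝ)+1)^2 := by positivity
  exact inv_pos.mpr this

lemma w_zero : w 0 = 1 := by norm_num [w]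

lemma w_le_one (n : ℕ) : w n ≤ 1 := by
  rw [w, inv_le_one_iff₀]
  right
  nlinarith [Nat.cast_nonneg (α := ℝ) n]

lemma w_antitone {i j : ℕ} (h : i ≤ j) : w j ≤ w i := by
  have hi : (0:ℝ) < ((i:ℝ)+1)^2 := by positivity
  apply inv_anti₀ hi
  have : (i:ℝ) ≤ j := Nat.cast_le.mpr h
  nlinarith

lemma sum_w_le (n : ℕ) : ∑ i ∈ Finset.range (n+1), w i ≤ 2 - 1/((n:ℝ)+1) := by
  induction n with
  | zero => simp [w_zero]; norm_num
  | succ n ih =>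
    rw [Finset.sum_range_succ]
    have h3 : (0:ℝ) < (n:ℝ)+1 := by positivity
    have h4 : (0:ℝ) < (n:ℝ)+2 := by positivity
    have h2 : w (n+1) ≤ 1/((n:ℝ)+1) - 1/((n:ℝ)+2) := by
      rw [w]
      rw [div_sub_div _ _ (ne_of_gt h3) (ne_of_gt h4), inv_eq_one_div]
      rw [div_le_div_iff₀ (by push_cast; positivity) (by positivity)]
      push_cast
      nlinarith
    have h5 : (1:ℝ)/((n:ℝ)+1+1) = 1/((n:ℝ)+2) := by norm_num; ring_nf
    push_cast
    push_cast at ih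
    linarith
  
lemma sum_w_le_two (n : ℕ) : ∑ i ∈ Finset.range (n+1), w i ≤ 2 := by
  have h : (0:ℝ) < 1/((n:ℝ)+1) := by positivity
  linarith [sum_w_le n]

lemma aux_inv_ineq {a b c : ℝ} (ha : 0 < a) (hb : 0 < b) (hc : 0 < c)
    (h : c ≤ 2*(a+b)) : a⁻¹ * b⁻¹ ≤ 4 * c⁻¹ * (a⁻¹ + b⁻¹) := by
  rw [inv_add_inv (ne_of_gt ha) (ne_of_gt hb), ← mul_inv]
  rw [div_eq_mul_inv, inv_le_iff_one_le_mul₀ (by positivity)]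
  have expand : 4 * c⁻¹ * ((a + b) * (a * b)⁻¹) * (a * b) = 4 * (a + b) * c⁻¹ := by
    field_simp
  rw [expand, ← div_eq_mul_inv, le_div_iff₀ (by positivity)]
  linarith

lemma w_mul_w_le {i j n : ℕ} (h : i + j = n) : w i * w j ≤ 4 * w n * (w i + w j) := by
  have hcast : (n:ℝ) = (i:ℝ) + (j:ℝ) := by exact_mod_cast congrArg (Nat.cast (R := ℝ)) h.symm
  have key : ((n:ℝ)+1)^2 ≤ 2*(((i:ℝ)+1)^2 + ((j:ℝ)+1)^2) := by
    rw [hcast]; nlinarith [sq_nonneg ((i:ℝ) - (j:ℝ)), sq_nonneg ((i:ℝ)+(j:ℝ))]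
  exact aux_inv_ineq (by positivity) (by positivity) (by positivity) key

lemma sum_antidiagonal_w (n : ℕ) :
    ∑ p ∈ Finset.HasAntidiagonal.antidiagonal n, w p.1 * w p.2 ≤ 16 * w n := by
  have h1 : ∑ p ∈ Finset.HasAntidiagonal.antidiagonal n, w p.1 * w p.2
      ≤ ∑ p ∈ Finset.HasAntidiagonal.antidiagonal n, 4 * w n * (w p.1 + w p.2) := by
    apply Finset.sum_le_sum
    intro p hp
    exact w_mul_w_le (Finset.HasAntidiagonal.mem_antidiagonal.mp hp)
  have h2 : ∑ p ∈ Finset.HasAntidiagonal.antidiagonal n, 4 * w n * (w p.1 + w p.2)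
      = 4 * w n * ((∑ p ∈ Finset.HasAntidiagonal.antidiagonal n, w p.1) + ∑ p ∈ Finset.HasAntidiagonal.antidiagonal n, w p.2) := by
    rw [← Finset.sum_add_distrib, ← Finset.mul_sum]
  have h3 : ∑ p ∈ Finset.HasAntidiagonal.antidiagonal n, w p.1 = ∑ i ∈ Finset.range (n+1), w i := by
    rw [Finset.Nat.sum_antidiagonal_eq_sum_range_succ_mk]
  have h4 : ∑ p ∈ Finset.HasAntidiagonal.antidiagonal n, w p.2 = ∑ i ∈ Finset.range (n+1), w (n - i) := by
    rw [Finset.Nat.sum_antidiagonal_eq_sum_range_succ_mk]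
  have h5 : ∑ i ∈ Finset.range (n+1), w (n - i) = ∑ i ∈ Finset.range (n+1), w i := by
    have := Finset.sum_range_reflect (fun j => w j) (n+1)
    simpa using this
  have h6 := sum_w_le_two n
  have h7 := w_pos n
  have hs1 : ∑ p ∈ Finset.HasAntidiagonal.antidiagonal n, w p.1 ≤ 2 := h3 ▸ h6
  have hs2 : ∑ p ∈ Finset.HasAntidiagonal.antidiagonal n, w p.2 ≤ 2 := by rw [h4, h5]; exact h6
  have hnn : 0 ≤ ∑ p ∈ Finset.HasAntidiagonal.antidiagonal n, w p.1 :=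
    Finset.sum_nonneg fun p _ => (w_pos _).le
  have hnn2 : 0 ≤ ∑ p ∈ Finset.HasAntidiagonal.antidiagonal n, w p.2 :=
    Finset.sum_nonneg fun p _ => (w_pos _).le
  nlinarith [h1, h2, w_pos n]

lemma inv_le_four_inv {a b : ℝ} (ha : 0 < a) (hb : 0 < b) (h : b ≤ 4*a) :
    a⁻¹ ≤ 4 * b⁻¹ := by
  have ha' : a⁻¹ * a = 1 := inv_mul_cancel₀ (ne_of_gt ha)
  have hb' : b⁻¹ * b = 1 := inv_mul_cancel₀ (ne_of_gt hb)
  have hp : 0 ≤ (4*a - b) * (a⁻¹ * b⁻¹) :=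
    mul_nonneg (by linarith) (mul_pos (inv_pos.mpr ha) (inv_pos.mpr hb)).le
  have key : (4*a - b)*(a⁻¹*b⁻¹) = 4*b⁻¹ - a⁻¹ := by
    field_simp
  rw [key] at hp
  linarith

lemma w_pred_le {n : ℕ} (h : 1 ≤ n) : w (n-1) ≤ 4 * w n := by
  obtain ⟨k, rfl⟩ : ∃ k, n = k + 1 := ⟨n - 1, by omega⟩
  simp only [Nat.add_sub_cancel, w]
  apply inv_le_four_inv (by positivity) (by positivity)
  push_cast
  nlinarith [Nat.cast_nonneg (α := ℝ) k]

lemma sq_succ_le_four_pow (n : ℕ) : ((n:ℝ)+1)^2 ≤ 4 ^ n := by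
  induction n with
  | zero => norm_num
  | succ n ih =>
    have : (4:ℝ)^(n+1) = 4 * 4^n := by ring
    rw [this]
    push_cast
    nlinarith [ih, Nat.cast_nonneg (α := ℝ) n]

/-- Weighted geometric bound on the coefficients of a power series. -/
def Bw (f : PowerSeries ℂ) (A D : ℝ) : Prop :=
  1 ≤ A ∧ 1 ≤ D ∧ ∀ n, ‖PowerSeries.coeff (R := ℂ) n f‖ ≤ A * D ^ n * w n

/-- convergence predicate used internally -/
def Conv (f : PowerSeries ℂ) : Prop := ∃ A D, Bw f A D

lemma Bw.mono {f : PowerSeries ℂ} {A D A' D' : ℝ} (hf : Bw f A D)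
    (hA : A ≤ A') (hD : D ≤ D') : Bw f A' D' := by
  obtain ⟨h1, h2, h3⟩ := hf
  refine ⟨le_trans h1 hA, le_trans h2 hD, fun n => le_trans (h3 n) ?_⟩
  have hw := (w_pos n).le
  have hDn : D ^ n ≤ D' ^ n := pow_le_pow_left₀ (by linarith) hD n
  have h0 : (0:ℝ) ≤ D ^ n := pow_nonneg (by linarith) n
  have h0' : (0:ℝ) ≤ A := by linarith
  apply mul_le_mul_of_nonneg_right _ hw
  exact mul_le_mul hA hDn h0 (by linarith)

lemma Bw.add {f g : PowerSeries ℂ} {A B D : ℝ} (hf : Bw f A D) (hg : Bw g B D) :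
    Bw (f + g) (A + B) D := by
  obtain ⟨h1, h2, h3⟩ := hf
  obtain ⟨h1', _, h3'⟩ := hg
  refine ⟨by linarith, h2, fun n => ?_⟩
  rw [map_add]
  calc ‖PowerSeries.coeff (R := ℂ) n f + PowerSeries.coeff (R := ℂ) n g‖
      ≤ ‖PowerSeries.coeff (R := ℂ) n f‖ + ‖PowerSeries.coeff (R := ℂ) n g‖ := norm_add_le _ _
    _ ≤ A * D ^ n * w n + B * D ^ n * w n := add_le_add (h3 n) (h3' n)
    _ = (A + B) * D ^ n * w n := by ring

lemma Bw.coeff_mul_le {f g : PowerSeries ℂ} {A B D : ℝ} (hf : Bw f A D) (hg : Bw g B D)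
    (n : ℕ) : ‖PowerSeries.coeff (R := ℂ) n (f * g)‖ ≤ 16 * (A * B) * D ^ n * w n := by
  obtain ⟨h1, h2, h3⟩ := hf
  obtain ⟨h1', _, h3'⟩ := hg
  rw [PowerSeries.coeff_mul]
  calc ‖∑ p ∈ Finset.HasAntidiagonal.antidiagonal n, PowerSeries.coeff (R := ℂ) p.1 f * PowerSeries.coeff (R := ℂ) p.2 g‖
      ≤ ∑ p ∈ Finset.HasAntidiagonal.antidiagonal n, ‖PowerSeries.coeff (R := ℂ) p.1 f * PowerSeries.coeff (R := ℂ) p.2 g‖ :=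
        norm_sum_le _ _
    _ ≤ ∑ p ∈ Finset.HasAntidiagonal.antidiagonal n, (A * B * D ^ n) * (w p.1 * w p.2) := by
        apply Finset.sum_le_sum
        intro p hp
        have hmem : p.1 + p.2 = n := Finset.HasAntidiagonal.mem_antidiagonal.mp hp
        rw [norm_mul]
        have e1 : A * B * D ^ n * (w p.1 * w p.2)
            = (A * D ^ p.1 * w p.1) * (B * D ^ p.2 * w p.2) := by
          rw [← hmem, pow_add]; ring
        rw [e1]
        have h2' : (0:ℝ) ≤ D ^ p.1 := pow_nonneg (by linarith) _
        exact mul_le_mul (h3 p.1) (h3' p.2) (norm_nonneg _)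
          (mul_nonneg (mul_nonneg (by linarith) h2') (w_pos p.1).le)
    _ = (A * B * D ^ n) * ∑ p ∈ Finset.HasAntidiagonal.antidiagonal n, (w p.1 * w p.2) := by
        rw [Finset.mul_sum]
    _ ≤ (A * B * D ^ n) * (16 * w n) := by
        apply mul_le_mul_of_nonneg_left (sum_antidiagonal_w n) (by positivity)
    _ = 16 * (A * B) * D ^ n * w n := by ring

lemma Bw.mul {f g : PowerSeries ℂ} {A B D : ℝ} (hf : Bw f A D) (hg : Bw g B D) :
    Bw (f * g) (16 * (A * B)) D := by
  refine ⟨?_, hf.2.1, hf.coeff_mul_le hg⟩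
  have := hf.1; have := hg.1
  nlinarith

lemma Bw.pow {f : PowerSeries ℂ} {A D : ℝ} (hf : Bw f A D) (k : ℕ) :
    Bw (f ^ k) ((16 * A) ^ k) D := by
  induction k with
  | zero =>
    refine ⟨le_refl _, hf.2.1, fun n => ?_⟩
    rw [pow_zero, pow_zero]
    rcases Nat.eq_zero_or_pos n with rfl | hn
    · simp [w_zero]
    · rw [PowerSeries.coeff_one, if_neg (Nat.pos_iff_ne_zero.mp hn)]
      simp only [norm_zero]
      have h2' : (0:ℝ) ≤ D ^ n := pow_nonneg (by linarith [hf.2.1]) _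
      have := (w_pos n).le
      nlinarith
  | succ k ih =>
    have := ih.mul hf
    have e : 16 * ((16 * A) ^ k * A) = (16 * A) ^ (k + 1) := by ring
    rw [pow_succ, ← e]
    exact this

lemma bw_of_geom {f : PowerSeries ℂ} {K C : ℝ} (hK : 1 ≤ K) (hC : 1 ≤ C)
    (hb : ∀ n, ‖PowerSeries.coeff (R := ℂ) n f‖ ≤ K * C ^ n) : Bw f K (4 * C) := by
  refine ⟨hK, by linarith, fun n => ?_⟩
  have h1 : (1:ℝ) ≤ 4 ^ n * w n := by
    rw [w]
    rw [← div_eq_mul_inv, le_div_iff₀ (by positivity)]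
    simpa using sq_succ_le_four_pow n
  calc ‖PowerSeries.coeff (R := ℂ) n f‖ ≤ K * C ^ n := hb n
    _ ≤ K * C ^ n * (4 ^ n * w n) := le_mul_of_one_le_right (by positivity) h1
    _ = K * (4 * C) ^ n * w n := by rw [mul_pow]; ring

lemma conv_of_geom {f : PowerSeries ℂ} {K C : ℝ} (hK0 : 0 ≤ K) (hC0 : 0 ≤ C)
    (hb : ∀ n, ‖PowerSeries.coeff (R := ℂ) n f‖ ≤ K * C ^ n) : Conv f := by
  have hK : ∀ n, ‖PowerSeries.coeff (R := ℂ) n f‖ ≤ (max K 1) * (max C 1) ^ n := by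
    intro n
    calc ‖PowerSeries.coeff (R := ℂ) n f‖ ≤ K * C ^ n := hb n
      _ ≤ (max K 1) * (max C 1) ^ n := by
        apply mul_le_mul (le_max_left _ _) _ (by positivity) (by positivity)
        exact pow_le_pow_left₀ hC0 (le_max_left _ _) n
  exact ⟨_, _, bw_of_geom (le_max_right _ _) (le_max_right _ _) hK⟩

end RootConv

namespace RootConv
open PowerSeries

lemma Conv.add {f g : PowerSeries ℂ} (hf : Conv f) (hg : Conv g) : Conv (f + g) := by
  obtain ⟨A, D, hf⟩ := hf
  obtain ⟨B, E, hg⟩ := hg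
  exact ⟨A + B, max D E, (hf.mono le_rfl (le_max_left _ _)).add
    (hg.mono le_rfl (le_max_right _ _))⟩

lemma Conv.mul {f g : PowerSeries ℂ} (hf : Conv f) (hg : Conv g) : Conv (f * g) := by
  obtain ⟨A, D, hf⟩ := hf
  obtain ⟨B, E, hg⟩ := hg
  exact ⟨_, _, (hf.mono le_rfl (le_max_left _ _)).mul (hg.mono le_rfl (le_max_right _ _))⟩

lemma Conv.pow {f : PowerSeries ℂ} (hf : Conv f) (k : ℕ) : Conv (f ^ k) := by
  obtain ⟨A, D, hf⟩ := hf
  exact ⟨_, _, hf.pow k⟩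

lemma conv_C (a : ℂ) : Conv (C (R := ℂ) a) := by
  apply conv_of_geom (K := ‖a‖ + 1) (C := 1) (by positivity) zero_le_one
  intro n
  rw [coeff_C]
  split_ifs with hn
  · subst hn
    simp only [pow_zero, mul_one]
    linarith [norm_nonneg a]
  · simp only [norm_zero, one_pow, mul_one]
    positivity

lemma conv_zero : Conv 0 := by simpa using conv_C 0

lemma conv_one : Conv 1 := by simpa using conv_C 1

lemma conv_X : Conv (X : PowerSeries ℂ) := by
  apply conv_of_geom (K := 1) (C := 1) zero_le_one zero_le_one
  intro n
  rw [coeff_X]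
  split_ifs <;> simp

lemma Conv.sum {s : Finset ℕ} {f : ℕ → PowerSeries ℂ} (hf : ∀ k ∈ s, Conv (f k)) :
    Conv (∑ k ∈ s, f k) := by
  classical
  induction s using Finset.cons_induction with
  | empty => simpa using conv_zero
  | cons a s' ha ih =>
    rw [Finset.sum_cons]
    exact (hf a (Finset.mem_cons_self a s')).add
      (ih fun k hk => hf k (Finset.mem_cons_of_mem hk))

lemma conv_of_ConvPS {f : PowerSeries ℂ} (hf : ConvPS f) : Conv f := by
  obtain ⟨C0, hC0⟩ := hf
  apply conv_of_geom (K := ‖coeff (R := ℂ) 0 f‖ + 1) (C := |C0|) (by positivity) (abs_nonneg _)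
  intro n
  rcases Nat.eq_zero_or_pos n with rfl | hn
  · simp only [pow_zero, mul_one]
    linarith [norm_nonneg (PowerSeries.coeff (R := ℂ) 0 f)]
  · calc ‖coeff (R := ℂ) n f‖ ≤ C0 ^ n := hC0 n (Nat.pos_iff_ne_zero.mp hn)
      _ ≤ |C0 ^ n| := le_abs_self _
      _ = |C0| ^ n := abs_pow _ _
      _ ≤ (‖coeff (R := ℂ) 0 f‖ + 1) * |C0| ^ n := by
          apply le_mul_of_one_le_left (by positivity)
          linarith [norm_nonneg (coeff (R := ℂ) 0 f)]

lemma ConvPS_of_conv {f : PowerSeries ℂ} (hf : Conv f) : ConvPS f := by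
  obtain ⟨A, D, h1, h2, h3⟩ := hf
  refine ⟨A * D, fun p hp => ?_⟩
  calc ‖coeff (R := ℂ) p f‖ ≤ A * D ^ p * w p := h3 p
    _ ≤ A * D ^ p * 1 := by
        apply mul_le_mul_of_nonneg_left (w_le_one p)
        have : (0:ℝ) ≤ D ^ p := pow_nonneg (by linarith) _
        nlinarith
    _ = A * D ^ p := mul_one _
    _ ≤ A ^ p * D ^ p := by
        apply mul_le_mul_of_nonneg_right (le_self_pow₀ h1 hp) (pow_nonneg (by linarith) _)
    _ = (A * D) ^ p := (mul_pow _ _ _).symm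

/-- shifting down: if `f = X^j * u` and `f` converges then `u` converges. -/
lemma Conv.shift {f u : PowerSeries ℂ} {j : ℕ} (hf : Conv f) (he : f = X ^ j * u) :
    Conv u := by
  obtain ⟨A, D, h1, h2, h3⟩ := hf
  refine ⟨A * D ^ j, D, ⟨?_, h2, fun n => ?_⟩⟩
  · have : (1:ℝ) ≤ D ^ j := one_le_pow₀ h2
    nlinarith
  · have e : coeff (R := ℂ) n u = coeff (R := ℂ) (n + j) f := by rw [he, coeff_X_pow_mul]
    rw [e]
    have hDn : (0:ℝ) ≤ D ^ n := pow_nonneg (by linarith) _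
    have hDj : (0:ℝ) ≤ D ^ j := pow_nonneg (by linarith) _
    have hD : (0:ℝ) ≤ A * D ^ n * D ^ j :=
      mul_nonneg (mul_nonneg (by linarith) hDn) hDj
    calc ‖coeff (R := ℂ) (n+j) f‖ ≤ A * D ^ (n+j) * w (n+j) := h3 _
      _ = (A * D ^ n * D ^ j) * w (n+j) := by rw [pow_add]; ring
      _ ≤ (A * D ^ n * D ^ j) * w n := mul_le_mul_of_nonneg_left
            (w_antitone (Nat.le_add_right n j)) hD
      _ = A * D ^ j * D ^ n * w n := by ring

/-- finitely supported series converge. -/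
lemma conv_of_finite {f : PowerSeries ℂ} {N : ℕ} (hf : ∀ n, N ≤ n → coeff (R := ℂ) n f = 0) :
    Conv f := by
  apply conv_of_geom (K := (∑ i ∈ Finset.range N, ‖coeff (R := ℂ) i f‖) + 1) (C := 1)
    (by positivity) zero_le_one
  intro n
  rcases lt_or_ge n N with hn | hn
  · simp only [one_pow, mul_one]
    have : ‖coeff (R := ℂ) n f‖ ≤ ∑ i ∈ Finset.range N, ‖coeff (R := ℂ) i f‖ :=
      Finset.single_le_sum (f := fun i => ‖coeff (R := ℂ) i f‖) (fun i _ => norm_nonneg _)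
        (Finset.mem_range.mpr hn)
    linarith
  · rw [hf n hn]
    simp only [norm_zero, one_pow, mul_one]
    positivity

end RootConv

namespace RootConv
open PowerSeries Finset

lemma geom_tail {D E : ℝ} (hD : 0 ≤ D) (hDE : D < E) (n : ℕ) :
    ∑ p ∈ (Finset.HasAntidiagonal.antidiagonal n).erase (0, n), D ^ p.1 * E ^ p.2 ≤ D * E ^ n / (E - D) := by
  have hE : 0 ≤ E := le_trans hD hDE.le
  induction n with
  | zero =>
    rw [Finset.Nat.antidiagonal_zero]
    simp only [Finset.erase_singleton, Finset.sum_empty]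
    have h3 : 0 < E - D := by linarith
    positivity
  | succ n ih =>
    rw [Finset.Nat.antidiagonal_succ, Finset.erase_cons, Finset.sum_map]
    have hfull : ∑ p ∈ Finset.HasAntidiagonal.antidiagonal n, D ^ p.1 * E ^ p.2
        ≤ E ^ n + D * E ^ n / (E - D) := by
      have hmem : ((0:ℕ), n) ∈ Finset.HasAntidiagonal.antidiagonal n := Finset.HasAntidiagonal.mem_antidiagonal.mpr (zero_add n)
      have hkey : D ^ (0:ℕ) * E ^ n + ∑ p ∈ (Finset.HasAntidiagonal.antidiagonal n).erase (0, n),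
          D ^ p.1 * E ^ p.2 = ∑ p ∈ Finset.HasAntidiagonal.antidiagonal n, D ^ p.1 * E ^ p.2 :=
        Finset.add_sum_erase (Finset.HasAntidiagonal.antidiagonal n) (fun p => D ^ p.1 * E ^ p.2) hmem
      rw [← hkey, pow_zero, one_mul]
      linarith [ih]
    have hstep : ∑ p ∈ Finset.HasAntidiagonal.antidiagonal n,
        D ^ ((Function.Embedding.prodMap ⟨Nat.succ, Nat.succ_injective⟩
          (Function.Embedding.refl ℕ)) p).1 * E ^ ((Function.Embedding.prodMap
          ⟨Nat.succ, Nat.succ_injective⟩ (Function.Embedding.refl ℕ)) p).2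
        = D * ∑ p ∈ Finset.HasAntidiagonal.antidiagonal n, D ^ p.1 * E ^ p.2 := by
      rw [Finset.mul_sum]
      apply Finset.sum_congr rfl
      intro p _
      cases p with
      | mk p1 p2 =>
        simp only [Function.Embedding.coe_prodMap, Function.Embedding.coeFn_mk,
          Function.Embedding.refl_apply, Prod.map_apply, Nat.succ_eq_add_one, id]
        rw [pow_succ]
        ring
    rw [hstep]
    have h1 : D * ∑ p ∈ Finset.HasAntidiagonal.antidiagonal n, D ^ p.1 * E ^ p.2
        ≤ D * (E ^ n + D * E ^ n / (E - D)) := mul_le_mul_of_nonneg_left hfull hD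
    have hEDne : E - D ≠ 0 := by intro hz; linarith
    have h2 : D * (E ^ n + D * E ^ n / (E - D)) = D * E ^ (n+1) / (E - D) := by
      field_simp
      ring_nf
    linarith

lemma conv_inv {f ω : PowerSeries ℂ} (hmul : f * ω = 1) (hf : Conv f) : Conv ω := by
  obtain ⟨A, D, hA1, hD1, hbw⟩ := hf
  set c := coeff (R := ℂ) 0 f with hc
  have hc0 : c * coeff (R := ℂ) 0 ω = 1 := by
    have h := congrArg (coeff (R := ℂ) 0) hmul
    rw [coeff_mul, Finset.Nat.antidiagonal_zero, Finset.sum_singleton] at h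
    have h1 : coeff (R := ℂ) 0 (1:PowerSeries ℂ) = 1 := by
      rw [coeff_zero_eq_constantCoeff, map_one]
    rw [h1] at h
    exact h
  have hcne : c ≠ 0 := left_ne_zero_of_mul_eq_one hc0
  have hcpos : 0 < ‖c‖ := norm_pos_iff.mpr hcne
  have hgeom : ∀ n, ‖coeff (R := ℂ) n f‖ ≤ A * D ^ n := by
    intro n
    have h1 := hbw n
    have h2 : A * D ^ n * w n ≤ A * D ^ n * 1 := by
      apply mul_le_mul_of_nonneg_left (w_le_one n)
      have : (0:ℝ) ≤ D ^ n := pow_nonneg (by linarith) _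
      nlinarith
    simpa using le_trans h1 h2
  set B := max ‖coeff (R := ℂ) 0 ω‖ 1 with hB
  have hB1 : 1 ≤ B := le_max_right _ _
  set E := D + A * D / ‖c‖ + 1 with hE
  have hDE : D < E := by
    have : 0 < A * D / ‖c‖ := by
      apply div_pos (by nlinarith) hcpos
    rw [hE]; linarith
  have hE1 : 1 ≤ E := by linarith
  have key : ∀ n, ‖coeff (R := ℂ) n ω‖ ≤ B * E ^ n := by
    intro n
    induction n using Nat.strong_induction_on with
    | _ n ih =>
      rcases Nat.eq_zero_or_pos n with rfl | hn
      · rw [pow_zero, mul_one]; exact le_max_left _ _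
      · -- recursion from f * ω = 1
        have hco : coeff (R := ℂ) n (f * ω) = 0 := by
          rw [hmul, coeff_one, if_neg (Nat.pos_iff_ne_zero.mp hn)]
        rw [coeff_mul] at hco
        have hmem : ((0:ℕ), n) ∈ Finset.HasAntidiagonal.antidiagonal n :=
          Finset.HasAntidiagonal.mem_antidiagonal.mpr (zero_add n)
        have hsplit : coeff (R := ℂ) 0 f * coeff (R := ℂ) n ω + ∑ p ∈ (Finset.HasAntidiagonal.antidiagonal n).erase (0, n),
            coeff (R := ℂ) p.1 f * coeff (R := ℂ) p.2 ω
            = ∑ p ∈ Finset.HasAntidiagonal.antidiagonal n, coeff (R := ℂ) p.1 f * coeff (R := ℂ) p.2 ω :=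
          Finset.add_sum_erase (Finset.HasAntidiagonal.antidiagonal n)
            (fun p => coeff (R := ℂ) p.1 f * coeff (R := ℂ) p.2 ω) hmem
        have heq : c * coeff (R := ℂ) n ω
            = -∑ p ∈ (Finset.HasAntidiagonal.antidiagonal n).erase (0, n), coeff (R := ℂ) p.1 f * coeff (R := ℂ) p.2 ω := by
          rw [← hsplit] at hco
          rw [hc]
          linear_combination hco
        have hbound : ‖c * coeff (R := ℂ) n ω‖
            ≤ A * B * (D * E ^ n / (E - D)) := by
          rw [heq, norm_neg]
          calc ‖∑ p ∈ (Finset.HasAntidiagonal.antidiagonal n).erase (0, n), coeff (R := ℂ) p.1 f * coeff (R := ℂ) p.2 ω‖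
              ≤ ∑ p ∈ (Finset.HasAntidiagonal.antidiagonal n).erase (0, n), ‖coeff (R := ℂ) p.1 f * coeff (R := ℂ) p.2 ω‖ :=
                norm_sum_le _ _
            _ ≤ ∑ p ∈ (Finset.HasAntidiagonal.antidiagonal n).erase (0, n), (A * B) * (D ^ p.1 * E ^ p.2) := by
                apply Finset.sum_le_sum
                intro p hp
                have hpmem : p.1 + p.2 = n :=
                  Finset.HasAntidiagonal.mem_antidiagonal.mp (Finset.mem_of_mem_erase hp)
                have hp1 : p.1 ≠ 0 := by
                  intro h0
                  apply Finset.ne_of_mem_erase hp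
                  have : p.2 = n := by omega
                  exact Prod.ext h0 this
                have hp2 : p.2 < n := by omega
                rw [norm_mul]
                calc ‖coeff (R := ℂ) p.1 f‖ * ‖coeff (R := ℂ) p.2 ω‖
                    ≤ (A * D ^ p.1) * (B * E ^ p.2) := by
                      apply mul_le_mul (hgeom p.1) (ih p.2 hp2) (norm_nonneg _)
                      positivity
                  _ = (A * B) * (D ^ p.1 * E ^ p.2) := by ring
            _ = (A * B) * ∑ p ∈ (Finset.HasAntidiagonal.antidiagonal n).erase (0, n), D ^ p.1 * E ^ p.2 := by
                rw [Finset.mul_sum]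
            _ ≤ (A * B) * (D * E ^ n / (E - D)) := by
                apply mul_le_mul_of_nonneg_left (geom_tail (by linarith) hDE n) (by nlinarith)
        have h3 : 0 < E - D := by linarith
        have hED : E - D = A * D / ‖c‖ + 1 := by rw [hE]; ring
        have hcd : ‖c‖ * (E - D) = A * D + ‖c‖ := by
          rw [hED, mul_add, mul_one, mul_div_cancel₀ _ hcpos.ne']
        have h4 : A * D / (E - D) ≤ ‖c‖ := by
          rw [div_le_iff₀ h3]
          nlinarith [hcd, hcpos]
        have hG : (0:ℝ) ≤ B * E ^ n := by
          have : (0:ℝ) ≤ E ^ n := pow_nonneg (by linarith) n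
          nlinarith
        have hfin : A * B * (D * E ^ n / (E - D)) ≤ ‖c‖ * (B * E ^ n) := by
          have e1 : A * B * (D * E ^ n / (E - D)) = (A * D / (E - D)) * (B * E ^ n) := by
            ring
          rw [e1]
          exact mul_le_mul_of_nonneg_right h4 hG
        rw [norm_mul] at hbound
        have hle := le_trans hbound hfin
        exact le_of_mul_le_mul_left hle hcpos
  exact conv_of_geom (by linarith) (by linarith) key

end RootConv

namespace RootConv
open PowerSeries Finset

lemma main_induction {m : ℕ} {U : PowerSeries ℂ} {s : ℕ → PowerSeries ℂ} {g : PowerSeries ℂ}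
    (hU : Conv U) (hs : ∀ k ∈ Finset.Icc 2 m, Conv (s k))
    (heq : g + U + X * ∑ k ∈ Finset.Icc 2 m, s k * g ^ k = 0) : Conv g := by
  classical
  -- extract common constants
  obtain ⟨AU, DU, hBU⟩ := hU
  choose As Ds hBs using hs
  set A0 : ℝ := AU + ∑ k ∈ (Finset.Icc 2 m).attach, As k.1 k.2 with hA0
  set D0 : ℝ := DU + ∑ k ∈ (Finset.Icc 2 m).attach, Ds k.1 k.2 with hD0
  have hAs_nonneg : ∀ k (hk : k ∈ Finset.Icc 2 m), (0:ℝ) ≤ As k hk :=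
    fun k hk => le_trans zero_le_one (hBs k hk).1
  have hDs_nonneg : ∀ k (hk : k ∈ Finset.Icc 2 m), (0:ℝ) ≤ Ds k hk :=
    fun k hk => le_trans zero_le_one (hBs k hk).2.1
  have hAU1 : 1 ≤ AU := hBU.1
  have hDU1 : 1 ≤ DU := hBU.2.1
  have hsumA : (0:ℝ) ≤ ∑ k ∈ (Finset.Icc 2 m).attach, As k.1 k.2 :=
    Finset.sum_nonneg fun k _ => hAs_nonneg k.1 k.2
  have hsumD : (0:ℝ) ≤ ∑ k ∈ (Finset.Icc 2 m).attach, Ds k.1 k.2 :=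
    Finset.sum_nonneg fun k _ => hDs_nonneg k.1 k.2
  have hA01 : 1 ≤ A0 := by rw [hA0]; linarith
  have hD01 : 1 ≤ D0 := by rw [hD0]; linarith
  have hAle : ∀ k (hk : k ∈ Finset.Icc 2 m), As k hk ≤ A0 := by
    intro k hk
    have : As k hk ≤ ∑ p ∈ (Finset.Icc 2 m).attach, As p.1 p.2 :=
      Finset.single_le_sum (f := fun p => As p.1 p.2)
        (fun p _ => hAs_nonneg p.1 p.2) (Finset.mem_attach _ ⟨k, hk⟩)
    rw [hA0]; linarith
  have hDle : ∀ k (hk : k ∈ Finset.Icc 2 m), Ds k hk ≤ D0 := by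
    intro k hk
    have : Ds k hk ≤ ∑ p ∈ (Finset.Icc 2 m).attach, Ds p.1 p.2 :=
      Finset.single_le_sum (f := fun p => Ds p.1 p.2)
        (fun p _ => hDs_nonneg p.1 p.2) (Finset.mem_attach _ ⟨k, hk⟩)
    rw [hD0]; linarith
  -- final constants
  set A : ℝ := A0 + 1 with hA
  set Γ : ℝ := ∑ k ∈ Finset.Icc 2 m, 16 * (A0 * (16 * A) ^ k) with hΓ
  have hΓ0 : 0 ≤ Γ := by
    rw [hΓ]
    apply Finset.sum_nonneg
    intro k _
    have : (0:ℝ) ≤ (16*A)^k := pow_nonneg (by linarith) _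
    nlinarith
  set D : ℝ := max D0 (4 * Γ + 1) with hD
  have hD1 : 1 ≤ D := le_trans hD01 (le_max_left _ _)
  have hA1 : 1 ≤ A := by rw [hA]; linarith
  have hDUD0 : DU ≤ D0 := by rw [hD0]; linarith
  have hBU' : Bw U A0 D := hBU.mono (by rw [hA0]; linarith)
    (le_trans hDUD0 (le_max_left _ _))
  have hBs' : ∀ k (hk : k ∈ Finset.Icc 2 m), Bw (s k) A0 D := by
    intro k hk
    exact (hBs k hk).mono (hAle k hk) (le_trans (hDle k hk) (le_max_left _ _))
  -- the coefficient recursion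
  have hrec : ∀ n : ℕ, coeff (R := ℂ) n g = -(coeff (R := ℂ) n U)
      - coeff (R := ℂ) n (X * ∑ k ∈ Finset.Icc 2 m, s k * g ^ k) := by
    intro n
    have := congrArg (coeff (R := ℂ) n) heq
    simp only [map_add, map_zero] at this
    linear_combination this
  -- main claim by strong induction
  have claim : ∀ n, ‖coeff (R := ℂ) n g‖ ≤ A * D ^ n * w n := by
    intro n
    induction n using Nat.strong_induction_on with
    | _ n ih =>
      rcases Nat.eq_zero_or_pos n with rfl | hn
      · -- n = 0
        have h0 : coeff (R := ℂ) 0 (X * ∑ k ∈ Finset.Icc 2 m, s k * g ^ k) = 0 := by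
          rw [← pow_one (X : PowerSeries ℂ), coeff_X_pow_mul']
          simp
        rw [hrec 0, h0]
        simp only [sub_zero, norm_neg, pow_zero, w_zero, mul_one]
        calc ‖coeff (R := ℂ) 0 U‖ ≤ A0 * D ^ 0 * w 0 := hBU'.2.2 0
          _ = A0 := by simp [w_zero]
          _ ≤ A := by rw [hA]; linarith
      · -- n ≥ 1
        obtain ⟨j, rfl⟩ : ∃ j, n = j + 1 := ⟨n - 1, by omega⟩
        -- truncation of g below n
        set gtr : PowerSeries ℂ := PowerSeries.mk
          (fun i => if i < j + 1 then coeff (R := ℂ) i g else 0) with hgtr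
        have hBg : Bw gtr A D := by
          refine ⟨hA1, hD1, fun i => ?_⟩
          rw [hgtr, coeff_mk]
          split_ifs with hi
          · exact ih i hi
          · simp only [norm_zero]
            have h1 : (0:ℝ) ≤ D ^ i := pow_nonneg (by linarith) _
            exact mul_nonneg (mul_nonneg (by linarith) h1) (w_pos i).le
        have hdvd : (X : PowerSeries ℂ) ^ (j+1) ∣ g - gtr := by
          rw [X_pow_dvd_iff]
          intro i hi
          rw [map_sub, hgtr, coeff_mk, if_pos hi, sub_self]
        -- coefficient of the nonlinear part
        have hcoeffS : ∀ k ∈ Finset.Icc 2 m,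
            coeff (R := ℂ) j (s k * g ^ k) = coeff (R := ℂ) j (s k * gtr ^ k) := by
          intro k _
          have hdvd2 : (X : PowerSeries ℂ) ^ (j+1) ∣ s k * g ^ k - s k * gtr ^ k := by
            have h1 : g - gtr ∣ g ^ k - gtr ^ k := sub_dvd_pow_sub_pow g gtr k
            have h2 : (X : PowerSeries ℂ) ^ (j+1) ∣ g ^ k - gtr ^ k := dvd_trans hdvd h1
            have e : s k * g ^ k - s k * gtr ^ k = s k * (g ^ k - gtr ^ k) := by ring
            rw [e]
            exact Dvd.dvd.mul_left h2 (s k)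
          have := (X_pow_dvd_iff.mp hdvd2) j (Nat.lt_succ_self j)
          rw [map_sub] at this
          exact sub_eq_zero.mp this
        -- bound the nonlinear part coefficient
        have hSbound : ‖coeff (R := ℂ) j (∑ k ∈ Finset.Icc 2 m, s k * g ^ k)‖
            ≤ Γ * D ^ j * w j := by
          rw [map_sum]
          calc ‖∑ k ∈ Finset.Icc 2 m, coeff (R := ℂ) j (s k * g ^ k)‖
              ≤ ∑ k ∈ Finset.Icc 2 m, ‖coeff (R := ℂ) j (s k * g ^ k)‖ := norm_sum_le _ _
            _ ≤ ∑ k ∈ Finset.Icc 2 m, 16 * (A0 * (16 * A) ^ k) * D ^ j * w j := by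
                apply Finset.sum_le_sum
                intro k hk
                rw [hcoeffS k hk]
                exact (hBs' k hk).coeff_mul_le (hBg.pow k) j
            _ = Γ * D ^ j * w j := by
                rw [hΓ, Finset.sum_mul, Finset.sum_mul]
        -- the linear recursion
        have hXS : coeff (R := ℂ) (j+1) (X * ∑ k ∈ Finset.Icc 2 m, s k * g ^ k)
            = coeff (R := ℂ) j (∑ k ∈ Finset.Icc 2 m, s k * g ^ k) := by
          rw [← pow_one (X : PowerSeries ℂ), coeff_X_pow_mul']
          rw [if_pos (by omega : 1 ≤ j + 1)]
          congr 1
        have hβ : ‖coeff (R := ℂ) (j+1) g‖ ≤ A0 * D ^ (j+1) * w (j+1) + Γ * D ^ j * w j := by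
          rw [hrec (j+1), hXS]
          calc ‖-(coeff (R := ℂ) (j+1) U) - coeff (R := ℂ) j (∑ k ∈ Finset.Icc 2 m, s k * g ^ k)‖
              ≤ ‖coeff (R := ℂ) (j+1) U‖ + ‖coeff (R := ℂ) j (∑ k ∈ Finset.Icc 2 m, s k * g ^ k)‖ := by
                have e : -(coeff (R := ℂ) (j+1) U) - coeff (R := ℂ) j (∑ k ∈ Finset.Icc 2 m, s k * g ^ k)
                    = -((coeff (R := ℂ) (j+1) U) + coeff (R := ℂ) j (∑ k ∈ Finset.Icc 2 m, s k * g ^ k)) := by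
                  ring
                rw [e, norm_neg]
                exact norm_add_le _ _
            _ ≤ A0 * D ^ (j+1) * w (j+1) + Γ * D ^ j * w j :=
                add_le_add (hBU'.2.2 (j+1)) hSbound
        -- final arithmetic
        have hw4 : w j ≤ 4 * w (j+1) := by
          have := w_pred_le (n := j+1) (by omega)
          simpa using this
        have hDj : (0:ℝ) ≤ D ^ j := pow_nonneg (by linarith) _
        have hΓD : 4 * Γ ≤ D := by
          have := le_max_right D0 (4 * Γ + 1)
          rw [hD]; linarith [le_max_right D0 (4 * Γ + 1)]
        have hstep : Γ * D ^ j * w j ≤ D ^ (j+1) * w (j+1) := by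
          calc Γ * D ^ j * w j ≤ Γ * D ^ j * (4 * w (j+1)) := by
                apply mul_le_mul_of_nonneg_left hw4
                exact mul_nonneg hΓ0 hDj
            _ = (4 * Γ) * D ^ j * w (j+1) := by ring
            _ ≤ D * D ^ j * w (j+1) := by
                apply mul_le_mul_of_nonneg_right
                  (mul_le_mul_of_nonneg_right hΓD hDj) (w_pos (j+1)).le
            _ = D ^ (j+1) * w (j+1) := by rw [pow_succ]; ring
        calc ‖coeff (R := ℂ) (j+1) g‖ ≤ A0 * D ^ (j+1) * w (j+1) + Γ * D ^ j * w j := hβ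
          _ ≤ A0 * D ^ (j+1) * w (j+1) + D ^ (j+1) * w (j+1) := by linarith
          _ = A * D ^ (j+1) * w (j+1) := by rw [hA]; ring
  exact ⟨A, D, hA1, hD1, claim⟩

end RootConv

namespace RootConv
open PowerSeries Finset

lemma conv_eval {p : Polynomial (PowerSeries ℂ)} (hc : ∀ i, Conv (p.coeff i))
    {x : PowerSeries ℂ} (hx : Conv x) : Conv (p.eval x) := by
  rw [Polynomial.eval_eq_sum_range]
  exact Conv.sum fun i _ => (hc i).mul (hx.pow i)

lemma conv_hasseDeriv_eval {Q : Polynomial (PowerSeries ℂ)}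
    (hQc : ∀ i, Conv (Q.coeff i)) (k : ℕ) {x : PowerSeries ℂ} (hx : Conv x) :
    Conv ((Polynomial.hasseDeriv k Q).eval x) := by
  apply conv_eval _ hx
  intro i
  rw [Polynomial.hasseDeriv_coeff]
  have hcast : (((i + k).choose k : PowerSeries ℂ)) = C (R := ℂ) (((i + k).choose k : ℕ) : ℂ) := by
    rw [map_natCast]
  rw [hcast]
  exact (conv_C _).mul (hQc (i + k))

lemma key {Q : Polynomial (PowerSeries ℂ)} (hQc : ∀ i, Conv (Q.coeff i))
    {h : PowerSeries ℂ} (hQ0 : Q.eval h = 0)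
    (hQ1 : (Polynomial.derivative Q).eval h ≠ 0) : Conv h := by
  classical
  set e : PowerSeries ℂ := (Polynomial.derivative Q).eval h with he
  have hv : ∃ n, coeff (R := ℂ) n e ≠ 0 := by
    by_contra hcon
    push_neg at hcon
    exact hQ1 (PowerSeries.ext hcon)
  set v := Nat.find hv with hvdef
  have hvc : coeff (R := ℂ) v e ≠ 0 := Nat.find_spec hv
  have hvmin : ∀ i, i < v → coeff (R := ℂ) i e = 0 := by
    intro i hi
    have := Nat.find_min hv hi
    simpa using this
  set N := v + 1 with hN
  -- decompose h = τ + X^N * g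
  set τ : PowerSeries ℂ := ((trunc N h : Polynomial ℂ) : PowerSeries ℂ) with hτ
  have hτcoeff : ∀ i, coeff (R := ℂ) i τ = if i < N then coeff (R := ℂ) i h else 0 := by
    intro i
    rw [hτ, Polynomial.coeff_coe, coeff_trunc]
  have hdvd1 : (X : PowerSeries ℂ) ^ N ∣ h - τ := by
    rw [X_pow_dvd_iff]
    intro i hi
    rw [map_sub, hτcoeff, if_pos hi, sub_self]
  obtain ⟨g, hg⟩ := hdvd1
  have hh : h = τ + X ^ N * g := by rw [← hg]; ring
  -- Taylor expansion
  set M := Q.natDegree with hM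
  have hM1 : 1 ≤ M := by
    by_contra hcon
    push_neg at hcon
    have hM0 : Q.natDegree = 0 := by omega
    have hQC : Q = Polynomial.C (Q.coeff 0) := Polynomial.eq_C_of_natDegree_eq_zero hM0
    apply hQ1
    rw [he, hQC]
    simp
  set T := Polynomial.taylor τ Q with hT
  set b : ℕ → PowerSeries ℂ := fun k => T.coeff k with hb
  have hmain : ∑ k ∈ Finset.range (M+1), b k * (X ^ N * g) ^ k = 0 := by
    have h1 : T.eval (X ^ N * g) = Q.eval h := by
      rw [hT, Polynomial.taylor_eval]
      congr 1
      rw [hh]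
      ring
    have h2 : T.eval (X ^ N * g) = ∑ k ∈ Finset.range (M+1), b k * (X ^ N * g) ^ k := by
      apply Polynomial.eval_eq_sum_range'
      rw [hT, Polynomial.natDegree_taylor]
      omega
    rw [← h2, h1, hQ0]
  -- b 1 agrees with e below N
  have hb1 : b 1 = (Polynomial.derivative Q).eval τ := by
    rw [hb]
    exact Polynomial.taylor_coeff_one τ Q
  have hb1e : (X : PowerSeries ℂ) ^ N ∣ b 1 - e := by
    have h1 : τ - h ∣ (Polynomial.derivative Q).eval τ - (Polynomial.derivative Q).eval h :=
      Polynomial.sub_dvd_eval_sub τ h (Polynomial.derivative Q)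
    have h2 : (X : PowerSeries ℂ) ^ N ∣ τ - h := by
      have : τ - h = -(h - τ) := by ring
      rw [this, hg]
      exact dvd_neg.mpr ⟨g, rfl⟩
    rw [hb1, he]
    exact dvd_trans h2 h1
  have hb1coeff : ∀ i, i < N → coeff (R := ℂ) i (b 1) = coeff (R := ℂ) i e := by
    intro i hi
    have := (X_pow_dvd_iff.mp hb1e) i hi
    rw [map_sub] at this
    exact sub_eq_zero.mp this
  have hdvdb1 : (X : PowerSeries ℂ) ^ v ∣ b 1 := by
    rw [X_pow_dvd_iff]
    intro i hi
    rw [hb1coeff i (by omega)]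
    exact hvmin i hi
  obtain ⟨wser, hwser⟩ := hdvdb1
  have hw0 : coeff (R := ℂ) 0 wser ≠ 0 := by
    have h1 : coeff (R := ℂ) v (b 1) = coeff (R := ℂ) 0 wser := by
      rw [hwser]
      have := coeff_X_pow_mul wser v 0
      rwa [zero_add] at this
    rw [← h1, hb1coeff v (by omega)]
    exact hvc
  -- b 0 is divisible by X^(N+v)
  have hmain2 : b 0 + b 1 * (X ^ N * g) + ∑ k ∈ Finset.Icc 2 M, b k * (X ^ N * g) ^ k = 0 := by
    have h1 : ∑ k ∈ Finset.range (M+1), b k * (X ^ N * g) ^ k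
        = b 0 + b 1 * (X ^ N * g) + ∑ k ∈ Finset.Icc 2 M, b k * (X ^ N * g) ^ k := by
      rw [Finset.range_eq_Ico]
      rw [Finset.sum_eq_sum_Ico_succ_bot (by omega)]
      rw [Finset.sum_eq_sum_Ico_succ_bot (by omega)]
      have : Finset.Ico 2 (M+1) = Finset.Icc 2 M := by
        rw [Finset.Ico_add_one_right_eq_Icc]
      rw [this, pow_zero, mul_one, pow_one]
      ring
    rw [← h1, hmain]
  have hdvdb0 : (X : PowerSeries ℂ) ^ (N + v) ∣ b 0 := by
    have h1 : b 0 = -(b 1 * (X ^ N * g)) - ∑ k ∈ Finset.Icc 2 M, b k * (X ^ N * g) ^ k := by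
      linear_combination hmain2
    rw [h1]
    apply dvd_sub
    · rw [hwser]
      apply dvd_neg.mpr
      have : X ^ v * wser * (X ^ N * g) = X ^ (N + v) * (wser * g) := by
        rw [pow_add]
        ring
      rw [this]
      exact ⟨wser * g, rfl⟩
    · apply Finset.dvd_sum
      intro k hk
      have hk2 : 2 ≤ k := (Finset.mem_Icc.mp hk).1
      have hle : N + v ≤ N * k := by
        have : N * 2 ≤ N * k := Nat.mul_le_mul_left N hk2
        omega
      have h2 : (X ^ N * g) ^ k = X ^ (N * k) * g ^ k := by
        rw [mul_pow, ← pow_mul]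
      rw [h2]
      have h3 : (X : PowerSeries ℂ) ^ (N + v) ∣ X ^ (N * k) := pow_dvd_pow X hle
      exact Dvd.dvd.mul_left (Dvd.dvd.mul_right h3 _) _
  obtain ⟨u, hu⟩ := hdvdb0
  -- the reduced equation
  have hXne : (X : PowerSeries ℂ) ^ (N + v) ≠ 0 := pow_ne_zero _ X_ne_zero
  have hred : u + wser * g + ∑ k ∈ Finset.Icc 2 M, (b k * X ^ (N * k - (N + v))) * g ^ k = 0 := by
    have hfactor : X ^ (N + v) * (u + wser * g
        + ∑ k ∈ Finset.Icc 2 M, (b k * X ^ (N * k - (N + v))) * g ^ k)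
        = b 0 + b 1 * (X ^ N * g) + ∑ k ∈ Finset.Icc 2 M, b k * (X ^ N * g) ^ k := by
      rw [mul_add, mul_add, ← hu]
      congr 1
      · congr 1
        rw [hwser, pow_add]
        ring
      · rw [Finset.mul_sum]
        apply Finset.sum_congr rfl
        intro k hk
        have hk2 : 2 ≤ k := (Finset.mem_Icc.mp hk).1
        have hle : N + v ≤ N * k := by
          have : N * 2 ≤ N * k := Nat.mul_le_mul_left N hk2
          omega
        have h2 : (X ^ N * g : PowerSeries ℂ) ^ k = X ^ (N * k) * g ^ k := by
          rw [mul_pow, ← pow_mul]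
        rw [h2]
        have h3 : (X : PowerSeries ℂ) ^ (N + v) * X ^ (N * k - (N + v)) = X ^ (N * k) := by
          rw [← pow_add]
          congr 1
          omega
        calc X ^ (N+v) * (b k * X ^ (N * k - (N + v)) * g ^ k)
            = b k * ((X ^ (N+v) * X ^ (N * k - (N + v))) * g ^ k) := by ring
          _ = b k * (X ^ (N * k) * g ^ k) := by rw [h3]
      -- done
    have := hfactor.trans hmain2
    rcases mul_eq_zero.mp this with hbad | hok
    · exact absurd hbad hXne
    · exact hok
  -- invert wser
  have hw0' : constantCoeff (R := ℂ) wser ≠ 0 := by rwa [← coeff_zero_eq_constantCoeff]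
  have hinv : wser * wser⁻¹ = 1 := PowerSeries.mul_inv_cancel wser hw0'
  set ω := wser⁻¹ with hω
  set U := ω * u with hU
  set s : ℕ → PowerSeries ℂ := fun k => ω * b k * X ^ (N * k - (N + v) - 1) with hs
  have heqg : g + U + X * ∑ k ∈ Finset.Icc 2 M, s k * g ^ k = 0 := by
    have h1 : ω * (u + wser * g
        + ∑ k ∈ Finset.Icc 2 M, (b k * X ^ (N * k - (N + v))) * g ^ k) = 0 := by
      rw [hred, mul_zero]
    have h2 : ω * (wser * g) = g := by
      rw [← mul_assoc, mul_comm ω wser, hinv, one_mul]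
    have h3 : ω * ∑ k ∈ Finset.Icc 2 M, (b k * X ^ (N * k - (N + v))) * g ^ k
        = X * ∑ k ∈ Finset.Icc 2 M, s k * g ^ k := by
      rw [Finset.mul_sum, Finset.mul_sum]
      apply Finset.sum_congr rfl
      intro k hk
      have hk2 : 2 ≤ k := (Finset.mem_Icc.mp hk).1
      have hge : 1 ≤ N * k - (N + v) := by
        have : N * 2 ≤ N * k := Nat.mul_le_mul_left N hk2
        omega
      have hXsplit : (X : PowerSeries ℂ) ^ (N * k - (N + v))
          = X * X ^ (N * k - (N + v) - 1) := by
        conv_lhs => rw [show N * k - (N + v) = 1 + (N * k - (N + v) - 1) by omega]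
        rw [pow_add, pow_one]
      rw [hs, hXsplit]
      ring
    rw [mul_add, mul_add, h2, h3] at h1
    linear_combination h1
  -- convergence of the data
  have hconvτ : Conv τ := by
    apply conv_of_finite (N := N)
    intro n hn
    rw [hτcoeff, if_neg (by omega)]
  have hconvb : ∀ k, Conv (b k) := by
    intro k
    have : b k = (Polynomial.hasseDeriv k Q).eval τ := Polynomial.taylor_coeff τ Q k
    rw [this]
    exact conv_hasseDeriv_eval hQc k hconvτ
  have hconvu : Conv u := (hconvb 0).shift hu
  have hconvw : Conv wser := (hconvb 1).shift hwser
  have hconvω : Conv ω := conv_inv hinv hconvw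
  have hconvU : Conv U := hconvω.mul hconvu
  have hconvs : ∀ k ∈ Finset.Icc 2 M, Conv (s k) := by
    intro k _
    exact (hconvω.mul (hconvb k)).mul (conv_X.pow _)
  -- conclude
  have hconvg : Conv g := main_induction hconvU hconvs heqg
  rw [hh]
  exact hconvτ.add ((conv_X.pow N).mul hconvg)

end RootConv

namespace RootConv
open PowerSeries Finset

theorem main (m : ℕ) (hm : 0 < m)
    (a : ℕ → PowerSeries ℂ) (haconv : ∀ j, 1 ≤ j → j ≤ m → ConvPS (a j))
    (h : PowerSeries ℂ)
    (hroot : h ^ m + ∑ j ∈ Finset.Icc 1 m, a j * h ^ (m - j) = 0) :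
    ConvPS h := by
  classical
  set P : Polynomial (PowerSeries ℂ) :=
    Polynomial.X ^ m + ∑ j ∈ Finset.Icc 1 m, Polynomial.C (a j) * Polynomial.X ^ (m - j) with hP
  have hPeval : P.eval h = 0 := by
    rw [hP]
    rw [Polynomial.eval_add, Polynomial.eval_pow, Polynomial.eval_X, Polynomial.eval_finset_sum]
    have : ∀ j ∈ Finset.Icc 1 m, (Polynomial.C (a j) * Polynomial.X ^ (m - j)).eval h
        = a j * h ^ (m - j) := by
      intro j _
      rw [Polynomial.eval_mul, Polynomial.eval_C, Polynomial.eval_pow, Polynomial.eval_X]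
    rw [Finset.sum_congr rfl this]
    exact hroot
  have hPcoeff : ∀ i, P.coeff i
      = (if m = i then 1 else 0) + ∑ j ∈ Finset.Icc 1 m, (if m - j = i then a j else 0) := by
    intro i
    rw [hP, Polynomial.coeff_add, Polynomial.coeff_X_pow, Polynomial.finset_sum_coeff]
    congr 1
    · by_cases h1 : i = m
      · rw [if_pos h1, if_pos h1.symm]
      · rw [if_neg h1, if_neg (fun hh => h1 hh.symm)]
    · apply Finset.sum_congr rfl
      intro j _
      rw [Polynomial.coeff_C_mul, Polynomial.coeff_X_pow]
      by_cases h1 : i = m - j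
      · rw [if_pos h1, if_pos h1.symm, mul_one]
      · rw [if_neg h1, if_neg (fun hh => h1 hh.symm), mul_zero]
  have hPconv : ∀ i, Conv (P.coeff i) := by
    intro i
    rw [hPcoeff]
    apply Conv.add
    · split_ifs
      · exact conv_one
      · exact conv_zero
    · apply Conv.sum
      intro j hj
      split_ifs
      · exact conv_of_ConvPS (haconv j (Finset.mem_Icc.mp hj).1 (Finset.mem_Icc.mp hj).2)
      · exact conv_zero
  have hPtop : P.coeff m = 1 := by
    rw [hPcoeff, if_pos rfl]
    have : ∀ j ∈ Finset.Icc 1 m, (if m - j = m then a j else 0) = 0 := by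
      intro j hj
      rw [if_neg]
      have h1 := (Finset.mem_Icc.mp hj).1
      omega
    rw [Finset.sum_congr rfl this]
    simp
  have hPhigh : ∀ i, m < i → P.coeff i = 0 := by
    intro i hi
    rw [hPcoeff, if_neg (by omega)]
    have : ∀ j ∈ Finset.Icc 1 m, (if m - j = i then a j else 0) = 0 := by
      intro j hj
      rw [if_neg (by omega)]
    rw [Finset.sum_congr rfl this]
    simp
  -- existence of a nonvanishing Hasse derivative at h
  have hHm : Polynomial.hasseDeriv m P = Polynomial.C 1 := by
    ext i
    rw [Polynomial.hasseDeriv_coeff, Polynomial.coeff_C]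
    rcases Nat.eq_zero_or_pos i with rfl | hi
    · rw [if_pos rfl, zero_add, Nat.choose_self, hPtop, Nat.cast_one, one_mul]
    · rw [if_neg (by omega), hPhigh (i + m) (by omega), mul_zero]
  have hexist : ∃ k, (Polynomial.hasseDeriv k P).eval h ≠ 0 := by
    refine ⟨m, ?_⟩
    rw [hHm, Polynomial.eval_C]
    exact one_ne_zero
  set d := Nat.find hexist with hd
  have hdspec : (Polynomial.hasseDeriv d P).eval h ≠ 0 := Nat.find_spec hexist
  have hd0 : d ≠ 0 := by
    intro h0
    apply hdspec
    rw [h0, Polynomial.hasseDeriv_zero']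
    exact hPeval
  set Q := Polynomial.hasseDeriv (d - 1) P with hQ
  have hQ0 : Q.eval h = 0 := by
    have := Nat.find_min hexist (show d - 1 < d by omega)
    rw [hQ]
    simpa using this
  have hQconv : ∀ i, Conv (Q.coeff i) := by
    intro i
    rw [hQ, Polynomial.hasseDeriv_coeff]
    have hcast : (((i + (d-1)).choose (d-1) : PowerSeries ℂ))
        = C (R := ℂ) (((i + (d-1)).choose (d-1) : ℕ) : ℂ) := by
      rw [map_natCast]
    rw [hcast]
    exact (conv_C _).mul (hPconv (i + (d-1)))
  have hQ1 : (Polynomial.derivative Q).eval h ≠ 0 := by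
    have hcomp := LinearMap.congr_fun
      (Polynomial.hasseDeriv_comp (R := PowerSeries ℂ) 1 (d - 1)) P
    rw [LinearMap.comp_apply, LinearMap.smul_apply] at hcomp
    have h1d : 1 + (d - 1) = d := by omega
    rw [h1d, Nat.choose_one_right] at hcomp
    have hder : Polynomial.derivative Q = d • Polynomial.hasseDeriv d P := by
      rw [hQ, ← Polynomial.hasseDeriv_one']
      exact hcomp
    rw [hder]
    have heval : (d • Polynomial.hasseDeriv d P).eval h
        = (d : PowerSeries ℂ) * (Polynomial.hasseDeriv d P).eval h := by
      rw [nsmul_eq_mul]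
      rw [Polynomial.eval_mul, Polynomial.eval_natCast]
    rw [heval]
    apply mul_ne_zero _ hdspec
    intro hz
    have : constantCoeff (R := ℂ) ((d : PowerSeries ℂ)) = 0 := by rw [hz, map_zero]
    rw [map_natCast] at this
    exact (Nat.cast_ne_zero (R := ℂ)).mpr hd0 this
  exact ConvPS_of_conv (key hQconv hQ0 hQ1)

end RootConv

/-- If `P(t,y) = y^m + a₁(t) y^{m-1} + ⋯ + a_m(t)` is monic in `y` with
convergent power series coefficients, and the formal power series `h` satisfies
`P(t, h(t)) = 0`, then `h` is convergent. -/
theorem root_of_monic_polynomial_convergent (m : ℕ) (hm : 0 < m)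
    (a : ℕ → PowerSeries ℂ) (haconv : ∀ j, 1 ≤ j → j ≤ m → ConvPS (a j))
    (h : PowerSeries ℂ)
    (hroot : h ^ m + ∑ j ∈ Finset.Icc 1 m, a j * h ^ (m - j) = 0) :
    ConvPS h :=
  RootConv.main m hm a haconv h hroot
end

section
/- Let h(x) be a convergent power series with h(0)=0 that is not a monomial of the form b_k x^k with σk = τ, where σ, τ are positive integers. Then the function u(x) = x^{−τ} h(x)^σ is a non-constant meromorphic function near 0, and for any small circle S = {|x| = r} (with r small enough that h is holomorphic on a neighborhood of {|x| ≤ r} and h(x) ≠ 0 for 0 < |x| ≤ r), the image F = u(S) is a compact subset of ℂ of positive logarithmic capacity. -/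
open MeasureTheory Filter

open Set

set_option maxHeartbeats 1000000


noncomputable def Phi : ℝ → ℝ := fun u => max 0 (-Real.log |u|)

lemma Phi_nonneg (u : ℝ) : 0 ≤ Phi u := le_max_left _ _

lemma Phi_measurable : Measurable Phi :=
  measurable_const.max (Real.measurable_log.comp measurable_abs).neg

lemma Phi_zero_of_one_le {u : ℝ} (hu : 1 ≤ |u|) : Phi u = 0 := by
  have : Real.log |u| ≥ 0 := Real.log_nonneg hu
  show max 0 (-Real.log |u|) = 0
  exact max_eq_left (neg_nonpos.mpr this)

lemma Phi_integrableOn_Ioc : IntegrableOn Phi (Ioc (0:ℝ) 1) := by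
  have hg : IntegrableOn (fun u : ℝ => 2 * u ^ (-(1/2) : ℝ)) (Ioc (0:ℝ) 1) := by
    have := (intervalIntegral.intervalIntegrable_rpow' (a := 0) (b := 1)
      (by norm_num : (-1:ℝ) < -(1/2)))
    rw [intervalIntegrable_iff_integrableOn_Ioc_of_le (by norm_num)] at this
    exact this.const_mul 2
  refine hg.integrable.mono (Phi_measurable.aestronglyMeasurable) ?_
  refine (ae_restrict_iff' measurableSet_Ioc).2 (Filter.Eventually.of_forall ?_)
  intro u hu
  have hu0 : 0 < u := hu.1
  have h1 : ‖Phi u‖ = Phi u := Real.norm_of_nonneg (Phi_nonneg u)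
  have hrp : (0:ℝ) < u ^ (-(1/2) : ℝ) := Real.rpow_pos_of_pos hu0 _
  have hlog : -Real.log u ≤ 2 * u ^ (-(1/2) : ℝ) := by
    have h2 : Real.log (u ^ (-(1/2) : ℝ)) = (-(1/2)) * Real.log u := Real.log_rpow hu0 _
    have h3 : Real.log (u ^ (-(1/2) : ℝ)) ≤ u ^ (-(1/2) : ℝ) - 1 :=
      Real.log_le_sub_one_of_pos hrp
    nlinarith [hrp]
  have : Phi u ≤ 2 * u ^ (-(1/2) : ℝ) := by
    rw [Phi, abs_of_pos hu0]
    exact max_le (by positivity) hlog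
  rw [h1]
  calc Phi u ≤ 2 * u ^ (-(1/2) : ℝ) := this
    _ ≤ ‖2 * u ^ (-(1/2) : ℝ)‖ := le_abs_self _

lemma Phi_integrable : Integrable Phi := by
  have h1 : IntegrableOn Phi (Ioc (0:ℝ) 1) := Phi_integrableOn_Ioc
  have h2 : Integrable (indicator (Ioc (0:ℝ) 1) Phi) :=
    (integrable_indicator_iff measurableSet_Ioc).2 h1
  have h3 : Integrable (fun u : ℝ => (indicator (Ioc (0:ℝ) 1) Phi) (-u)) := h2.comp_neg
  have key : Phi = fun u => (indicator (Ioc (0:ℝ) 1) Phi) u + (indicator (Ioc (0:ℝ) 1) Phi) (-u) := by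
    funext u
    rcases lt_trichotomy u 0 with hu | hu | hu
    · have : u ∉ Ioc (0:ℝ) 1 := by simp [Ioc]; intro h; linarith
      rw [indicator_of_notMem this]
      by_cases h2 : -u ∈ Ioc (0:ℝ) 1
      · rw [indicator_of_mem h2]; simp [Phi, abs_neg]
      · have : 1 ≤ |u| := by
          simp only [mem_Ioc, not_and_or, not_lt, not_le] at h2
          rcases h2 with h | h
          · linarith
          · rw [abs_of_neg hu]; linarith
        rw [indicator_of_notMem h2, Phi_zero_of_one_le this]; ring
    · subst hu; simp [Phi]
    · have h2 : -u ∉ Ioc (0:ℝ) 1 := by simp [Ioc]; intro h; linarith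
      rw [indicator_of_notMem h2]
      by_cases h3 : u ∈ Ioc (0:ℝ) 1
      · rw [indicator_of_mem h3]; ring
      · have : 1 ≤ |u| := by
          simp only [mem_Ioc, not_and_or, not_lt, not_le] at h3
          rcases h3 with h | h
          · linarith
          · rw [abs_of_pos hu]; linarith
        rw [indicator_of_notMem h3, Phi_zero_of_one_le this]; ring
  rw [key]
  exact h2.add h3


lemma logCap_pos_of_two_points {E : Set ℂ} (hE : IsCompact E) (hconn : IsPreconnected E)
    {a b : ℂ} (ha : a ∈ E) (hb : b ∈ E) (hab : a ≠ b) : 0 < logCap E := by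
  classical
  set L : ℝ := ‖b - a‖ with hLdef
  have hL : 0 < L := by simpa [hLdef] using sub_ne_zero.2 hab.symm
  set e : ℂ := (b - a) / (L : ℂ) with hedef
  have hLne : (L : ℂ) ≠ 0 := by exact_mod_cast hL.ne'
  have hee : e * (starRingEnd ℂ) e = 1 := by
    rw [Complex.mul_conj]
    have : ‖e‖ = 1 := by
      simp only [hedef, norm_div, Complex.norm_real, Real.norm_eq_abs, abs_of_pos hL]
      rw [div_eq_one_iff_eq (by exact hL.ne')]
    rw [Complex.normSq_eq_norm_sq, this]
    norm_num
  set p : ℂ → ℝ := fun z => ((starRingEnd ℂ) e * (z - a)).re with hpdef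
  set w : ℂ → ℝ := fun z => ((starRingEnd ℂ) e * (z - a)).im with hwdef
  have hcoord : ∀ t y : ℝ, (starRingEnd ℂ) e * ((a + e * (↑t + ↑y * Complex.I)) - a)
      = ↑t + ↑y * Complex.I := by
    intro t y
    have : (a + e * (↑t + ↑y * Complex.I)) - a = e * (↑t + ↑y * Complex.I) := by ring
    rw [this, ← mul_assoc, mul_comm ((starRingEnd ℂ) e) e, hee, one_mul]
  have hpcoord : ∀ t y : ℝ, p (a + e * (↑t + ↑y * Complex.I)) = t := by
    intro t y
    show ((starRingEnd ℂ) e * ((a + e * (↑t + ↑y * Complex.I)) - a)).re = t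
    rw [hcoord t y]; simp
  have hwcoord : ∀ t y : ℝ, w (a + e * (↑t + ↑y * Complex.I)) = y := by
    intro t y
    show ((starRingEnd ℂ) e * ((a + e * (↑t + ↑y * Complex.I)) - a)).im = y
    rw [hcoord t y]; simp
  have hrecon : ∀ z : ℂ, a + e * (↑(p z) + ↑(w z) * Complex.I) = z := by
    intro z
    have h1 : (↑(p z) + ↑(w z) * Complex.I) = (starRingEnd ℂ) e * (z - a) :=
      Complex.re_add_im _
    rw [h1, ← mul_assoc, hee, one_mul]; ring
  have hplip : ∀ z z' : ℂ, |p z - p z'| ≤ ‖z - z'‖ := by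
    intro z z'
    have h1 : p z - p z' = ((starRingEnd ℂ) e * (z - z')).re := by
      rw [hpdef]; simp only [← Complex.sub_re, ← mul_sub]; ring_nf
    rw [h1]
    refine (Complex.abs_re_le_norm _).trans ?_
    rw [norm_mul]
    have : ‖(starRingEnd ℂ) e‖ = 1 := by
      rw [Complex.norm_conj]
      have := hee
      simp only [Complex.mul_conj] at this
      have h2 : Complex.normSq e = 1 := by exact_mod_cast this
      have := Complex.normSq_eq_norm_sq e
      nlinarith [norm_nonneg e]
    rw [this, one_mul]
  have hpa : p a = 0 := by rw [hpdef]; simp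
  have hpb : p b = L := by
    have hba : b - a = e * (L : ℂ) := by
      rw [hedef, div_mul_cancel₀ _ hLne]
    rw [hpdef]
    simp only [hba, ← mul_assoc, mul_comm ((starRingEnd ℂ) e) e, hee, one_mul]
    simp
  have hpcont : Continuous p := by
    rw [hpdef]; exact (Complex.continuous_re.comp (continuous_const.mul (continuous_id.sub continuous_const)))
  have hwcont : Continuous w := by
    rw [hwdef]; exact (Complex.continuous_im.comp (continuous_const.mul (continuous_id.sub continuous_const)))
  obtain ⟨R, hR⟩ := hE.isBounded.subset_closedBall 0
  set M : ℝ := R + ‖a‖ with hMdef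
  have hwboundE : ∀ x ∈ E, |w x| ≤ M := by
    intro x hx
    have h1 : |w x| ≤ ‖(starRingEnd ℂ) e * (x - a)‖ := Complex.abs_im_le_norm _
    have h2 : ‖(starRingEnd ℂ) e * (x - a)‖ = ‖x - a‖ := by
      rw [norm_mul]
      have : ‖(starRingEnd ℂ) e‖ = 1 := by
        rw [Complex.norm_conj]
        have := hee; simp only [Complex.mul_conj] at this
        have h2 : Complex.normSq e = 1 := by exact_mod_cast this
        have := Complex.normSq_eq_norm_sq e
        nlinarith [norm_nonneg e]
      rw [this, one_mul]
    have h3 : ‖x - a‖ ≤ ‖x‖ + ‖a‖ := norm_sub_le _ _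
    have h4 : ‖x‖ ≤ R := by simpa using hR hx
    calc |w x| ≤ ‖x - a‖ := h1.trans_eq h2
      _ ≤ M := by rw [hMdef]; linarith
  set Fib : ℝ → Set ℝ := fun t => {y : ℝ | a + e * (↑t + ↑y * Complex.I) ∈ E} with hFibdef
  have hFib_closed : ∀ t, IsClosed (Fib t) := by
    intro t
    have : Continuous fun y : ℝ => a + e * (↑t + ↑y * Complex.I) :=
      continuous_const.add (continuous_const.mul
        (continuous_const.add (Complex.continuous_ofReal.mul continuous_const)))
    exact hE.isClosed.preimage this
  have hFib_bdd : ∀ t, BddBelow (Fib t) := by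
    intro t
    refine ⟨-M, fun y hy => ?_⟩
    have := hwboundE _ hy
    rw [hwcoord t y] at this
    linarith [neg_abs_le y]
  have hFib_ne : ∀ t ∈ Icc (0:ℝ) L, (Fib t).Nonempty := by
    intro t ht
    have hiv : Icc (p a) (p b) ⊆ p '' E :=
      hconn.intermediate_value ha hb hpcont.continuousOn
    rw [hpa, hpb] at hiv
    obtain ⟨x, hxE, hpx⟩ := hiv ht
    exact ⟨w x, by rw [hFibdef]; simp only [Set.mem_setOf_eq, ← hpx]; rw [hrecon x]; exact hxE⟩
  set q : ℝ → ℝ := fun t => if t ∈ Icc (0:ℝ) L then sInf (Fib t) else 0 with hqdef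
  have hqmem : ∀ t ∈ Icc (0:ℝ) L, q t ∈ Fib t := by
    intro t ht
    rw [hqdef]; simp only [ht, if_true]
    exact (hFib_closed t).csInf_mem (hFib_ne t ht) (hFib_bdd t)
  have hqle : ∀ t ∈ Icc (0:ℝ) L, ∀ y ∈ Fib t, q t ≤ y := by
    intro t ht y hy
    rw [hqdef]; simp only [ht, if_true]
    exact csInf_le (hFib_bdd t) hy
  -- measurability of q
  have hq_meas : Measurable q := by
    apply measurable_of_Iic
    intro c
    have hKc : IsCompact (E ∩ w ⁻¹' Iic c) :=
      hE.inter_right (isClosed_Iic.preimage hwcont)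
    have hK_meas : MeasurableSet (p '' (E ∩ w ⁻¹' Iic c)) :=
      ((hKc.image hpcont).isClosed).measurableSet
    have hset : q ⁻¹' Iic c =
        (p '' (E ∩ w ⁻¹' Iic c) ∩ Icc (0:ℝ) L) ∪ (if (0:ℝ) ≤ c then (Icc (0:ℝ) L)ᶜ else ∅) := by
      ext t
      by_cases ht : t ∈ Icc (0:ℝ) L
      · have hqt : q t = sInf (Fib t) := by rw [hqdef]; simp [ht]
        simp only [Set.mem_preimage, Set.mem_Iic, Set.mem_union, Set.mem_inter_iff, hqt]
        constructor
        · intro hle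
          left
          have hx := hpcoord t (sInf (Fib t))
          refine ⟨⟨_, ?_, hx⟩, ht⟩
          refine ⟨?_, ?_⟩
          · have := hqmem t ht; rw [hqdef] at this; simp only [ht, if_true] at this; exact this
          · simp only [Set.mem_preimage, Set.mem_Iic, hwcoord t _]; exact hle
        · rintro (⟨⟨x, ⟨hxE, hxw⟩, hpx⟩, -⟩ | hbad)
          · have hyFib : w x ∈ Fib t := by
              rw [hFibdef]; simp only [Set.mem_setOf_eq, ← hpx]; rw [hrecon x]; exact hxE
            have := csInf_le (hFib_bdd t) hyFib
            simp only [Set.mem_preimage, Set.mem_Iic] at hxw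
            linarith
          · split_ifs at hbad with hc
            · exact absurd ht (Set.mem_compl_iff _ _ |>.mp hbad)
            · exact absurd hbad (Set.notMem_empty t)
      · have hqt : q t = 0 := by rw [hqdef]; simp [ht]
        simp only [Set.mem_preimage, Set.mem_Iic, Set.mem_union, Set.mem_inter_iff, hqt]
        constructor
        · intro hc
          right; split_ifs with h
          · exact ht
          · exact absurd hc h
        · rintro (⟨-, hbad⟩ | h)
          · exact absurd hbad ht
          · split_ifs at h with hc
            · exact hc
            · exact absurd h (Set.notMem_empty t)
    rw [hset]
    refine (hK_meas.inter measurableSet_Icc).union ?_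
    split_ifs
    · exact measurableSet_Icc.compl
    · exact MeasurableSet.empty
  set s : ℝ → ℂ := fun t => a + e * (↑t + ↑(q t) * Complex.I) with hsdef
  have hs_meas : Measurable s := by
    rw [hsdef]
    apply measurable_const.add
    apply Measurable.const_mul
    exact Complex.measurable_ofReal.add ((Complex.measurable_ofReal.comp hq_meas).mul_const _)
  have hsE : ∀ t ∈ Icc (0:ℝ) L, s t ∈ E := fun t ht => hqmem t ht
  have hps : ∀ t ∈ Icc (0:ℝ) L, p (s t) = t := fun t ht => hpcoord t (q t)
  set ν : Measure ℝ := volume.restrict (Icc (0:ℝ) L) with hνdef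
  set μ : Measure ℂ := (ENNReal.ofReal L)⁻¹ • Measure.map s ν with hμdef
  have hmapuniv : Measure.map s ν Set.univ = ENNReal.ofReal L := by
    rw [Measure.map_apply hs_meas MeasurableSet.univ]
    simp [hνdef, Real.volume_Icc]
  have hprob : IsProbabilityMeasure μ := by
    constructor
    rw [hμdef, Measure.smul_apply, hmapuniv, smul_eq_mul]
    rw [ENNReal.inv_mul_cancel (by simpa using hL) ENNReal.ofReal_ne_top]
  have hnull : μ Eᶜ = 0 := by
    rw [hμdef, Measure.smul_apply,
      Measure.map_apply hs_meas hE.isClosed.measurableSet.compl]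
    have : ν (s ⁻¹' Eᶜ) = 0 := by
      rw [hνdef, Measure.restrict_apply (hs_meas hE.isClosed.measurableSet.compl)]
      have : s ⁻¹' Eᶜ ∩ Icc (0:ℝ) L = ∅ := by
        ext t; simp only [Set.mem_inter_iff, Set.mem_preimage, Set.mem_compl_iff,
          Set.mem_empty_iff_false, iff_false, not_and]
        intro hne ht; exact hne (hsE t ht)
      rw [this]; simp
    rw [this, smul_zero]
  -- the key integral bound
  set C₀ : ℝ := ∫ u, Phi u with hC₀def
  have hkey : ∀ (z : ℂ) (N : ℕ),
      (∫ ζ, min (N : ℝ) (Real.log (1 / ‖z - ζ‖)) ∂μ) ≤ L⁻¹ * C₀ := by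
    intro z N
    set f : ℂ → ℝ := fun ζ => min (N : ℝ) (Real.log (1 / ‖z - ζ‖)) with hfdef
    have hnorm_meas : Measurable fun ζ : ℂ => ‖z - ζ‖ :=
      (measurable_const.sub measurable_id).norm
    have hfmeas : Measurable f := by
      rw [hfdef]
      exact measurable_const.min (Real.measurable_log.comp (measurable_const.div hnorm_meas))
    have hstep1 : (∫ ζ, f ζ ∂μ) = L⁻¹ * ∫ t in Icc (0:ℝ) L, f (s t) := by
      rw [hμdef, integral_smul_measure,
        integral_map hs_meas.aemeasurable hfmeas.aestronglyMeasurable]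
      rw [ENNReal.toReal_inv, ENNReal.toReal_ofReal hL.le, smul_eq_mul]
    have hint2 : Integrable (fun t : ℝ => Phi (t - p z)) :=
      Phi_integrable.comp_sub_right (p z)
    have hint1 : Integrable (fun t => f (s t)) ν := by
      set B1 : ℝ := max 1 (‖z‖ + R) with hB1def
      have hB1 : (1:ℝ) ≤ B1 := le_max_left _ _
      set Bd : ℝ := max (N : ℝ) (Real.log B1) with hBddef
      refine Integrable.mono' (g := fun _ => Bd)
        (integrableOn_const measure_Icc_lt_top.ne)
        ((hfmeas.comp hs_meas).aestronglyMeasurable) ?_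
      rw [hνdef]
      refine (ae_restrict_iff' measurableSet_Icc).2 (Filter.Eventually.of_forall ?_)
      intro t ht
      have hxE : s t ∈ E := hsE t ht
      have hd : ‖z - s t‖ ≤ ‖z‖ + R := by
        have h4 : ‖s t‖ ≤ R := by simpa using hR hxE
        calc ‖z - s t‖ ≤ ‖z‖ + ‖s t‖ := norm_sub_le _ _
          _ ≤ ‖z‖ + R := by linarith
      have hlogB1 : 0 ≤ Real.log B1 := Real.log_nonneg hB1
      have hlow : -Real.log B1 ≤ Real.log (1 / ‖z - s t‖) := by
        rcases eq_or_lt_of_le (norm_nonneg (z - s t)) with h0 | h0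
        · rw [← h0]; simp; linarith
        · rw [one_div, Real.log_inv]
          have : Real.log ‖z - s t‖ ≤ Real.log B1 :=
            Real.log_le_log h0 (hd.trans (le_max_right _ _))
          linarith
      rw [Real.norm_eq_abs, abs_le]
      constructor
      · have : -Bd ≤ -Real.log B1 := by
          simp only [hBddef, neg_le_neg_iff]; exact le_max_right _ _
        refine this.trans (le_min ?_ hlow)
        calc -Real.log B1 ≤ 0 := by linarith
          _ ≤ (N : ℝ) := Nat.cast_nonneg N
      · exact (min_le_left _ _).trans (le_max_left _ _)
    have hae : ∀ᵐ t ∂ν, f (s t) ≤ Phi (t - p z) := by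
      have h1 : ∀ᵐ t : ℝ ∂volume, t ≠ p z := by
        rw [ae_iff]
        have : {t : ℝ | ¬ t ≠ p z} = {p z} := by ext t; simp
        rw [this]; exact measure_singleton _
      filter_upwards [ae_restrict_of_ae h1, ae_restrict_mem measurableSet_Icc] with t htne ht
      have hxE : s t ∈ E := hsE t ht
      have habs : |t - p z| ≤ ‖z - s t‖ := by
        have := hplip (s t) z
        rw [hps t ht] at this
        rwa [norm_sub_rev]
      have hpos : 0 < |t - p z| := abs_pos.2 (sub_ne_zero.2 htne)
      have h2 : Real.log (1 / ‖z - s t‖) ≤ Real.log (1 / |t - p z|) := by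
        have hzpos : 0 < ‖z - s t‖ := lt_of_lt_of_le hpos habs
        refine Real.log_le_log (by positivity) ?_
        exact one_div_le_one_div_of_le hpos habs
      have h3 : Real.log (1 / |t - p z|) ≤ Phi (t - p z) := by
        rw [one_div, Real.log_inv]
        exact le_max_right _ _
      exact (min_le_right _ _).trans (h2.trans h3)
    have hstep2 : ∫ t in Icc (0:ℝ) L, f (s t) ≤ ∫ t in Icc (0:ℝ) L, Phi (t - p z) :=
      integral_mono_ae hint1 hint2.integrableOn hae
    have hstep3 : ∫ t in Icc (0:ℝ) L, Phi (t - p z) ≤ C₀ := by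
      have h4 : ∫ t in Icc (0:ℝ) L, Phi (t - p z) ≤ ∫ t, Phi (t - p z) :=
        setIntegral_le_integral hint2 (Filter.Eventually.of_forall fun t => Phi_nonneg _)
      have h5 : (∫ t : ℝ, Phi (t - p z)) = C₀ := integral_sub_right_eq_self Phi (p z)
      linarith
    rw [hstep1]
    have : (0:ℝ) ≤ L⁻¹ := by positivity
    calc L⁻¹ * ∫ t in Icc (0:ℝ) L, f (s t) ≤ L⁻¹ * C₀ := by
          apply mul_le_mul_of_nonneg_left _ this
          linarith
      _ = L⁻¹ * C₀ := rfl
  -- conclude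
  have hpot : ∀ z : ℂ, logPotential μ z ≤ ((L⁻¹ * C₀ : ℝ) : EReal) := by
    intro z
    refine iSup_le fun N => ?_
    exact_mod_cast EReal.coe_le_coe_iff.2 (hkey z N)
  have hrobin : robinConst E ≤ ((L⁻¹ * C₀ : ℝ) : EReal) := by
    calc robinConst E ≤ ⨆ z : ℂ, logPotential μ z := by
          refine iInf_le_of_le μ ?_
          refine iInf_le_of_le hprob ?_
          exact iInf_le _ hnull
      _ ≤ _ := iSup_le hpot
  have hlt : robinConst E < ⊤ := lt_of_le_of_lt hrobin (EReal.coe_lt_top _)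
  rw [logCap]
  rw [show (0 : ENNReal) = EReal.exp ⊥ from rfl]
  rw [EReal.exp_lt_exp_iff]
  rw [show (⊥ : EReal) = -(⊤ : EReal) from rfl]
  rw [EReal.neg_lt_neg_iff]
  exact hlt


lemma eventually_const_of_pow_eventually_const {g : ℂ → ℂ} {σ : ℕ} (hσ : 0 < σ)
    (hg : AnalyticAt ℂ g 0) (hg0 : g 0 ≠ 0) {c : ℂ}
    (heq : ∀ᶠ x in nhds (0:ℂ), g x ^ σ = c) :
    ∀ᶠ x in nhds (0:ℂ), g x = g 0 := by
  have heq' : (fun x => g x ^ σ) =ᶠ[nhds (0:ℂ)] (fun _ => c) := heq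
  have hder : deriv (fun x => g x ^ σ) =ᶠ[nhds (0:ℂ)] deriv (fun _ : ℂ => c) := heq'.deriv
  have hders : ∀ᶠ x in nhds (0:ℂ), DifferentiableAt ℂ g x ∧ deriv g x = 0 := by
    filter_upwards [hder, hg.eventually_analyticAt,
      hg.continuousAt.eventually_ne hg0] with x h1 h2 h3
    have hdiff : DifferentiableAt ℂ g x := h2.differentiableAt
    refine ⟨hdiff, ?_⟩
    have hpw : deriv (fun y => g y ^ σ) x = (σ:ℂ) * g x ^ (σ-1) * deriv g x :=
      (hdiff.hasDerivAt.pow σ).deriv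
    rw [hpw, deriv_const] at h1
    have hne : (σ : ℂ) * g x ^ (σ - 1) ≠ 0 :=
      mul_ne_zero (Nat.cast_ne_zero.2 hσ.ne') (pow_ne_zero _ h3)
    have : (σ : ℂ) * g x ^ (σ - 1) * deriv g x = 0 := h1
    rcases mul_eq_zero.1 this with h | h
    · exact absurd h hne
    · exact h
  rw [Metric.eventually_nhds_iff] at hders
  obtain ⟨ε, hε, hball⟩ := hders
  have hconst : ∀ x ∈ Metric.ball (0:ℂ) ε, g x = g 0 := by
    intro x hx
    refine (convex_ball (0:ℂ) ε).is_const_of_fderivWithin_eq_zero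
      (fun y hy => ((hball (by simpa [dist_eq_norm] using hy)).1).differentiableWithinAt)
      (fun y hy => ?_) hx (Metric.mem_ball_self hε)
    rw [fderivWithin_of_isOpen Metric.isOpen_ball hy]
    obtain ⟨hdiff, hd0⟩ := hball (by simpa [dist_eq_norm] using hy)
    have h1 : HasDerivAt g 0 y := by
      have := hdiff.hasDerivAt
      rwa [hd0] at this
    have h2 := hasDerivAt_iff_hasFDerivAt.1 h1
    have h3 : (ContinuousLinearMap.toSpanSingleton ℂ (0:ℂ)) = 0 := by
      ext; simp
    rw [h3] at h2
    exact h2.fderiv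
  exact Filter.eventually_of_mem (Metric.ball_mem_nhds 0 hε) hconst

lemma core_not_pow_monomial (σ τ : ℕ) (hσ : 0 < σ) (hτ : 0 < τ) (h : ℂ → ℂ)
    (hA : AnalyticAt ℂ h 0)
    (hnev : ¬ ∀ᶠ x in nhds (0:ℂ), h x = 0)
    (hmono : ¬ ∃ (b : ℂ) (k : ℕ), σ * k = τ ∧ ∀ᶠ x in nhds (0:ℂ), h x = b * x ^ k) :
    ¬ ∃ c : ℂ, ∀ᶠ x in nhds (0:ℂ), h x ^ σ = c * x ^ τ := by
  rintro ⟨c, hc⟩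
  have hord : analyticOrderAt h 0 ≠ ⊤ := fun H => hnev (analyticOrderAt_eq_top.1 H)
  obtain ⟨k, hk⟩ := WithTop.ne_top_iff_exists.1 hord
  obtain ⟨g, hgA, hg0, hfac⟩ := hA.analyticOrderAt_eq_natCast.1 hk.symm
  have hfac' : ∀ᶠ z in nhds (0:ℂ), h z = z ^ k * g z := by
    filter_upwards [hfac] with z hz
    simpa [smul_eq_mul] using hz
  have hcne : c ≠ 0 := by
    rintro rfl
    apply hnev
    filter_upwards [hc] with x hx
    simp only [zero_mul] at hx
    exact pow_eq_zero_iff hσ.ne' |>.1 hx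
  have hcomb : ∀ᶠ x in nhds (0:ℂ), x ^ (σ * k) * g x ^ σ = c * x ^ τ := by
    filter_upwards [hc, hfac'] with x h1 h2
    rw [h2, mul_pow, ← pow_mul, mul_comm k σ] at h1
    exact h1
  have hcombW : ∀ᶠ x in nhdsWithin (0:ℂ) {(0:ℂ)}ᶜ,
      x ^ (σ * k) * g x ^ σ = c * x ^ τ := hcomb.filter_mono nhdsWithin_le_nhds
  have hgc : Tendsto (fun x => g x ^ σ) (nhdsWithin (0:ℂ) {(0:ℂ)}ᶜ) (nhds (g 0 ^ σ)) :=
    ((hgA.continuousAt.pow σ).tendsto).mono_left nhdsWithin_le_nhds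
  rcases lt_trichotomy (σ * k) τ with hlt | heq | hgt
  · -- σk < τ
    have hev : ∀ᶠ x in nhdsWithin (0:ℂ) {(0:ℂ)}ᶜ, g x ^ σ = c * x ^ (τ - σ * k) := by
      filter_upwards [hcombW, self_mem_nhdsWithin] with x hx hx0
      have hxne : x ≠ 0 := hx0
      have hxp : x ^ τ = x ^ (σ * k) * x ^ (τ - σ * k) := by
        rw [← pow_add]; congr 1; omega
      have h5 : x ^ (σ * k) * g x ^ σ = x ^ (σ * k) * (c * x ^ (τ - σ * k)) := by
        rw [hx, hxp]; ring
      exact mul_left_cancel₀ (pow_ne_zero _ hxne) h5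
    have h2 : Tendsto (fun x : ℂ => c * x ^ (τ - σ * k)) (nhdsWithin (0:ℂ) {(0:ℂ)}ᶜ)
        (nhds 0) := by
      have hco : ContinuousAt (fun x : ℂ => c * x ^ (τ - σ * k)) 0 :=
        continuousAt_const.mul (continuousAt_pow _ _)
      have h0 : c * (0:ℂ) ^ (τ - σ * k) = 0 := by
        rw [zero_pow (by omega : τ - σ * k ≠ 0), mul_zero]
      have := hco.tendsto
      rw [h0] at this
      exact this.mono_left nhdsWithin_le_nhds
    have := tendsto_nhds_unique_of_eventuallyEq hgc h2 hev
    exact hg0 (pow_eq_zero_iff hσ.ne' |>.1 this)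
  · -- σk = τ
    have hev : ∀ᶠ x in nhdsWithin (0:ℂ) {(0:ℂ)}ᶜ, g x ^ σ = c := by
      filter_upwards [hcombW, self_mem_nhdsWithin] with x hx hx0
      have hxne : x ≠ 0 := hx0
      have h5 : x ^ (σ * k) * g x ^ σ = x ^ (σ * k) * c := by
        rw [hx, heq]; ring
      exact mul_left_cancel₀ (pow_ne_zero _ hxne) h5
    have hlim : g 0 ^ σ = c :=
      tendsto_nhds_unique_of_eventuallyEq hgc tendsto_const_nhds hev
    have hevn : ∀ᶠ x in nhds (0:ℂ), g x ^ σ = c := by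
      rw [eventually_nhdsWithin_iff] at hev
      filter_upwards [hev] with x hx
      by_cases hx0 : x = 0
      · rw [hx0]; exact hlim
      · exact hx hx0
    have hgconst := eventually_const_of_pow_eventually_const hσ hgA hg0 hevn
    refine hmono ⟨g 0, k, heq, ?_⟩
    filter_upwards [hfac', hgconst] with x h1 h2
    rw [h1, h2, mul_comm]
  · -- σk > τ
    have hev : ∀ᶠ x in nhdsWithin (0:ℂ) {(0:ℂ)}ᶜ, g x ^ σ * x ^ (σ * k - τ) = c := by
      filter_upwards [hcombW, self_mem_nhdsWithin] with x hx hx0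
      have hxne : x ≠ 0 := hx0
      have hxp : x ^ (σ * k) = x ^ τ * x ^ (σ * k - τ) := by
        rw [← pow_add]; congr 1; omega
      have h5 : x ^ τ * (g x ^ σ * x ^ (σ * k - τ)) = x ^ τ * c := by
        rw [hxp] at hx; linear_combination hx
      exact mul_left_cancel₀ (pow_ne_zero _ hxne) h5
    have h2 : Tendsto (fun x : ℂ => g x ^ σ * x ^ (σ * k - τ)) (nhdsWithin (0:ℂ) {(0:ℂ)}ᶜ)
        (nhds 0) := by
      have hco : ContinuousAt (fun x : ℂ => g x ^ σ * x ^ (σ * k - τ)) 0 :=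
        (hgA.continuousAt.pow σ).mul (continuousAt_pow _ _)
      have h0 : g 0 ^ σ * (0:ℂ) ^ (σ * k - τ) = 0 := by
        rw [zero_pow (by omega : σ * k - τ ≠ 0), mul_zero]
      have := hco.tendsto
      rw [h0] at this
      exact this.mono_left nhdsWithin_le_nhds
    have := tendsto_nhds_unique_of_eventuallyEq h2 tendsto_const_nhds hev
    exact hcne this.symm

/-- If `h` is holomorphic near the closed disc of radius `r`, `h(0)=0`,
`h ≠ 0` on the punctured disc, and `h` is not a monomial `b x^k` with `σk = τ`,
then `u(x) = x^{-τ} h(x)^σ` is non-constant (on the punctured disc), and the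
image `F = u(S)` of the circle `S = {|x| = r}` is compact of positive
logarithmic capacity. -/
theorem image_of_circle_positive_capacity (σ τ : ℕ) (hσ : 0 < σ) (hτ : 0 < τ)
    (h : ℂ → ℂ) (r : ℝ) (hr : 0 < r)
    (hhol : ∀ x ∈ Metric.closedBall (0 : ℂ) r, AnalyticAt ℂ h x)
    (hh0 : h 0 = 0)
    (hne : ∀ x : ℂ, x ≠ 0 → ‖x‖ ≤ r → h x ≠ 0)
    (hmono : ¬ ∃ (b : ℂ) (k : ℕ), σ * k = τ ∧ ∀ᶠ x in nhds (0 : ℂ), h x = b * x ^ k) :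
    (¬ ∃ c : ℂ, ∀ x : ℂ, x ≠ 0 → ‖x‖ ≤ r → x ^ (-(τ : ℤ)) * h x ^ σ = c) ∧
    IsCompact ((fun x => x ^ (-(τ : ℤ)) * h x ^ σ) '' Metric.sphere (0 : ℂ) r) ∧
    0 < logCap ((fun x => x ^ (-(τ : ℤ)) * h x ^ σ) '' Metric.sphere (0 : ℂ) r) := by
  set u : ℂ → ℂ := fun x => x ^ (-(τ : ℤ)) * h x ^ σ with hudef
  have hA : AnalyticAt ℂ h 0 := hhol 0 (by simp [hr.le])
  have hnev : ¬ ∀ᶠ x in nhds (0:ℂ), h x = 0 := by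
    intro H
    rw [Metric.eventually_nhds_iff] at H
    obtain ⟨ε, hε, hH⟩ := H
    set x : ℂ := ((min ε r / 2 : ℝ) : ℂ) with hxdef
    have hxnorm : ‖x‖ = min ε r / 2 := by
      rw [hxdef, Complex.norm_real, Real.norm_eq_abs, abs_of_pos (by positivity)]
    have hx0 : x ≠ 0 := by
      intro h0
      rw [h0, norm_zero] at hxnorm
      have : 0 < min ε r / 2 := by positivity
      linarith
    have hxr : ‖x‖ ≤ r := by
      rw [hxnorm]
      have : min ε r ≤ r := min_le_right _ _
      linarith
    have hxε : dist x 0 < ε := by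
      rw [dist_zero_right, hxnorm]
      have : min ε r ≤ ε := min_le_left _ _
      linarith
    exact hne x hx0 hxr (hH hxε)
  have hcore := core_not_pow_monomial σ τ hσ hτ h hA hnev hmono
  -- algebra helper
  have halg : ∀ x : ℂ, x ≠ 0 → ∀ c : ℂ, u x = c → h x ^ σ = c * x ^ τ := by
    intro x hx0 c hcx
    have hxτ : x ^ τ ≠ 0 := pow_ne_zero _ hx0
    rw [hudef] at hcx
    simp only [zpow_neg, zpow_natCast] at hcx
    calc h x ^ σ = x ^ τ * ((x ^ τ)⁻¹ * h x ^ σ) := by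
          rw [← mul_assoc, mul_inv_cancel₀ hxτ, one_mul]
      _ = x ^ τ * c := by rw [hcx]
      _ = c * x ^ τ := mul_comm _ _
  -- part 1
  have part1 : ¬ ∃ c : ℂ, ∀ x : ℂ, x ≠ 0 → ‖x‖ ≤ r → u x = c := by
    rintro ⟨c, hc⟩
    refine hcore ⟨c, ?_⟩
    filter_upwards [Metric.ball_mem_nhds (0:ℂ) hr] with x hx
    by_cases hx0 : x = 0
    · rw [hx0, hh0, zero_pow hσ.ne', zero_pow hτ.ne', mul_zero]
    · exact halg x hx0 c (hc x hx0 (le_of_lt (mem_ball_zero_iff.1 hx)))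
  -- continuity on the sphere
  have hucont : ContinuousOn u (Metric.sphere (0:ℂ) r) := by
    intro x hx
    have hxr : ‖x‖ = r := by simpa using hx
    have hx0 : x ≠ 0 := by
      intro h0; rw [h0, norm_zero] at hxr; exact hr.ne hxr
    have hxcb : x ∈ Metric.closedBall (0:ℂ) r :=
      Metric.mem_closedBall.2 (by rw [dist_zero_right, hxr])
    exact ((continuousAt_zpow₀ x _ (Or.inl hx0)).mul
      (((hhol x hxcb).continuousAt).pow σ)).continuousWithinAt
  have part2 : IsCompact (u '' Metric.sphere (0:ℂ) r) :=
    (isCompact_sphere (0:ℂ) r).image_of_continuousOn hucont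
  -- connectedness of the image
  have hrank : (1 : Cardinal) < Module.rank ℝ ℂ := by
    rw [Complex.rank_real_complex]; norm_num
  have hconnF : IsConnected (u '' Metric.sphere (0:ℂ) r) :=
    (isConnected_sphere hrank (0:ℂ) hr.le).image u hucont
  -- two distinct values on the sphere
  have h2pts : ∃ x₁ ∈ Metric.sphere (0:ℂ) r, ∃ x₂ ∈ Metric.sphere (0:ℂ) r, u x₁ ≠ u x₂ := by
    by_contra H
    push_neg at H
    set x₀ : ℂ := ((r : ℝ) : ℂ) with hx₀def
    have hx₀s : x₀ ∈ Metric.sphere (0:ℂ) r := by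
      simp [hx₀def, Complex.norm_real, abs_of_pos hr]
    have hx₀cb : x₀ ∈ Metric.closedBall (0:ℂ) r :=
      Metric.sphere_subset_closedBall hx₀s
    have hx₀0 : x₀ ≠ 0 := by
      rw [hx₀def]
      exact_mod_cast (Complex.ofReal_ne_zero).2 hr.ne'
    set c : ℂ := u x₀ with hcdef
    set f : ℂ → ℂ := fun x => h x ^ σ - c * x ^ τ with hfdef
    have hfs : ∀ x ∈ Metric.sphere (0:ℂ) r, f x = 0 := by
      intro x hx
      have hxr : ‖x‖ = r := by simpa using hx
      have hx0 : x ≠ 0 := by intro h0; rw [h0, norm_zero] at hxr; exact hr.ne hxr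
      have := halg x hx0 c (H x hx x₀ hx₀s)
      rw [hfdef]; simp [this]
    -- a sequence on the sphere tending to x₀ within {x₀}ᶜ
    set t : ℕ → ℝ := fun n => 1 / (n + 1) with htdef
    have ht_pos : ∀ n, 0 < t n := fun n => by positivity
    have ht_le : ∀ n, t n ≤ 1 := by
      intro n
      rw [htdef]
      rw [div_le_one (by positivity)]
      simp
    set y : ℕ → ℂ := fun n =>
      ((r : ℝ) : ℂ) * (((Real.cos (t n) : ℝ) : ℂ) + ((Real.sin (t n) : ℝ) : ℂ) * Complex.I)
      with hydef
    have hynorm : ∀ n, ‖y n‖ = r := by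
      intro n
      rw [hydef, norm_mul, Complex.norm_real, Real.norm_eq_abs, abs_of_pos hr,
        Complex.ofReal_cos, Complex.ofReal_sin,
        Complex.norm_cos_add_sin_mul_I, mul_one]
    have hys : ∀ n, y n ∈ Metric.sphere (0:ℂ) r := by
      intro n; simp [mem_sphere_zero_iff_norm, hynorm n]
    have hyne : ∀ n, y n ≠ x₀ := by
      intro n hEq
      have him : (y n).im = 0 := by rw [hEq, hx₀def]; simp
      rw [hydef] at him
      simp only [Complex.mul_im, Complex.ofReal_re, Complex.ofReal_im, Complex.add_im,
        Complex.add_re, Complex.mul_I_im, Complex.mul_I_re, Complex.ofReal_im] at him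
      have hsin : Real.sin (t n) > 0 := by
        apply Real.sin_pos_of_pos_of_lt_pi (ht_pos n)
        calc t n ≤ 1 := ht_le n
          _ < Real.pi := by linarith [Real.pi_gt_three]
      have : r * Real.sin (t n) = 0 := by
        rw [← him]; ring_nf; simp
      nlinarith
    have htt : Filter.Tendsto t Filter.atTop (nhds 0) := by
      rw [htdef]
      exact tendsto_one_div_add_atTop_nhds_zero_nat
    have hyt : Filter.Tendsto y Filter.atTop (nhds x₀) := by
      have hcont : Continuous fun s : ℝ =>
          ((r : ℝ) : ℂ) * (((Real.cos s : ℝ) : ℂ) + ((Real.sin s : ℝ) : ℂ) * Complex.I) := by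
        apply continuous_const.mul
        exact (Complex.continuous_ofReal.comp Real.continuous_cos).add
          ((Complex.continuous_ofReal.comp Real.continuous_sin).mul continuous_const)
      have h9 := (hcont.tendsto 0).comp htt
      have h10 : ((fun s : ℝ =>
          ((r : ℝ) : ℂ) * (((Real.cos s : ℝ) : ℂ) + ((Real.sin s : ℝ) : ℂ) * Complex.I)) ∘ t) = y :=
        rfl
      rw [h10] at h9
      simpa [hx₀def, Real.cos_zero, Real.sin_zero] using h9
    have hytW : Filter.Tendsto y Filter.atTop (nhdsWithin x₀ {x₀}ᶜ) :=
      tendsto_nhdsWithin_of_tendsto_nhds_of_eventually_within _ hyt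
        (Filter.Eventually.of_forall fun n => hyne n)
    have hfreq : ∃ᶠ z in nhdsWithin x₀ {x₀}ᶜ, f z = 0 :=
      hytW.frequently (Filter.Frequently.of_forall fun n => hfs (y n) (hys n))
    have hfa : AnalyticAt ℂ f x₀ := by
      rw [hfdef]
      exact ((hhol x₀ hx₀cb).pow σ).sub (analyticAt_const.mul (analyticAt_id.pow τ))
    have hevER : ∀ᶠ z in nhds x₀, f z = 0 :=
      (hfa.frequently_eq_iff_eventually_eq analyticAt_const).1 hfreq
    rw [Metric.eventually_nhds_iff] at hevER
    obtain ⟨ε, hε, hball⟩ := hevER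
    set δ : ℝ := min (ε / (2 * r)) (1 / 2) with hδdef
    have hδpos : 0 < δ := by
      rw [hδdef]; exact lt_min (by positivity) (by norm_num)
    have hδhalf : δ ≤ 1 / 2 := min_le_right _ _
    have hδε : δ * r ≤ ε / 2 := by
      have h1 : δ ≤ ε / (2 * r) := min_le_left _ _
      calc δ * r ≤ (ε / (2 * r)) * r := by nlinarith
        _ = ε / 2 := by field_simp
    set z₀ : ℂ := ((1 - δ : ℝ) : ℂ) * x₀ with hz₀def
    have hz₀ball : z₀ ∈ Metric.ball (0:ℂ) r := by
      rw [mem_ball_zero_iff, hz₀def, hx₀def, norm_mul, Complex.norm_real,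
        Complex.norm_real, Real.norm_eq_abs, Real.norm_eq_abs,
        abs_of_pos (by linarith : (0:ℝ) < 1 - δ), abs_of_pos hr]
      nlinarith
    have hz₀x₀ : dist z₀ x₀ < ε := by
      rw [dist_eq_norm, hz₀def, hx₀def]
      have : ((1 - δ : ℝ) : ℂ) * ((r:ℝ):ℂ) - ((r:ℝ):ℂ) = ((-(δ * r) : ℝ) : ℂ) := by
        push_cast; ring
      rw [this, Complex.norm_real, Real.norm_eq_abs, abs_neg, abs_of_pos (by positivity)]
      linarith
    have heq_z₀ : f =ᶠ[nhds z₀] (fun _ => (0:ℂ)) := by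
      have hmem : Metric.ball x₀ ε ∈ nhds z₀ :=
        Metric.isOpen_ball.mem_nhds (by simpa [Metric.mem_ball] using hz₀x₀)
      exact Filter.eventually_of_mem hmem fun z hz => hball (Metric.mem_ball.1 hz)

    have hfanB : AnalyticOnNhd ℂ f (Metric.ball (0:ℂ) r) := by
      intro x hx
      rw [hfdef]
      exact ((hhol x (Metric.ball_subset_closedBall hx)).pow σ).sub
        (analyticAt_const.mul (analyticAt_id.pow τ))
    have hEqOn : Set.EqOn f (fun _ => (0:ℂ)) (Metric.ball (0:ℂ) r) := by
      have := hfanB.eqOn_of_preconnected_of_eventuallyEq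
        (g := fun _ => (0:ℂ)) (fun x _ => analyticAt_const)
        (convex_ball (0:ℂ) r).isPreconnected hz₀ball heq_z₀
      exact this
    refine hcore ⟨c, ?_⟩
    filter_upwards [Metric.ball_mem_nhds (0:ℂ) hr] with x hx
    have := hEqOn hx
    rw [hfdef] at this
    simpa [sub_eq_zero] using this
  obtain ⟨x₁, hx₁, x₂, hx₂, hx12⟩ := h2pts
  refine ⟨part1, part2, ?_⟩
  exact logCap_pos_of_two_points part2 hconnF.isPreconnected
    ⟨x₁, hx₁, rfl⟩ ⟨x₂, hx₂, rfl⟩ hx12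
end

section
/- Let β(x) = cx + ⋯ (c ≠ 0) be a power series convergent and univalent in a neighborhood of {|x| ≤ r}, with inverse γ convergent on {|z| < δ} where {|z| < δ} ⊂ β({|x| < r}). Let ψ(t) be a formal power series and ν a positive integer such that α(x) := ψ(β(x)^ν) is convergent in a neighborhood of {|x| ≤ r}. Then ψ(t) is convergent on {|t| < δ^ν} and sup_{|t|<δ^ν} |ψ(t)| ≤ max_{|x|=r} |α(x)|. -/
open Asymptotics Filter Metric Polynomial
open scoped Topology

/-- The Taylor series of a function `F : ℂ → ℂ` at `0`. -/
noncomputable def taylorPS (F : ℂ → ℂ) : PowerSeries ℂ :=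
  PowerSeries.mk fun n => iteratedDeriv n F 0 / (n.factorial : ℂ)

noncomputable def SPfun (u : PowerSeries ℂ) (n : ℕ) (z : ℂ) : ℂ :=
  ∑ k ∈ Finset.range n, PowerSeries.coeff (R := ℂ) k u * z ^ k

def JetO (f : ℂ → ℂ) (u : PowerSeries ℂ) (n : ℕ) : Prop :=
  (fun z => f z - SPfun u n z) =O[𝓝[≠] (0:ℂ)] (fun z => z ^ n)

lemma sum_pow_isBigO (c : ℕ → ℂ) (m n : ℕ) (h : ∀ k < n, c k = 0) :
    (fun z : ℂ => ∑ k ∈ Finset.range m, c k * z ^ k) =O[𝓝[≠] (0:ℂ)] (fun z => z ^ n) := by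
  apply IsBigO.fun_sum
  intro k hk
  by_cases hkn : k < n
  · simpa [h k hkn] using (isBigO_zero (g := fun z : ℂ => z ^ n) (𝓝[≠] (0:ℂ)))
  · push_neg at hkn
    rw [isBigO_iff]
    refine ⟨‖c k‖, ?_⟩
    have h1 : ∀ᶠ z : ℂ in 𝓝[≠] (0:ℂ), ‖z‖ ≤ 1 := by
      apply eventually_nhdsWithin_of_eventually_nhds
      have : Metric.closedBall (0:ℂ) 1 ∈ 𝓝 (0:ℂ) := Metric.closedBall_mem_nhds _ one_pos
      filter_upwards [this] with z hz using by simpa using mem_closedBall_zero_iff.1 hz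
    filter_upwards [h1] with z hz
    rw [norm_mul, norm_pow, norm_pow]
    exact mul_le_mul_of_nonneg_left (pow_le_pow_of_le_one (norm_nonneg z) hz hkn) (norm_nonneg _)

lemma SPfun_congr {u v : PowerSeries ℂ} {n : ℕ}
    (h : ∀ k < n, PowerSeries.coeff (R := ℂ) k u = PowerSeries.coeff (R := ℂ) k v) (z : ℂ) :
    SPfun u n z = SPfun v n z := by
  refine Finset.sum_congr rfl fun k hk => ?_
  rw [h k (Finset.mem_range.1 hk)]

lemma JetO.congr_coeff {f : ℂ → ℂ} {u v : PowerSeries ℂ} {n : ℕ} (hj : JetO f u n)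
    (h : ∀ k < n, PowerSeries.coeff (R := ℂ) k u = PowerSeries.coeff (R := ℂ) k v) : JetO f v n := by
  unfold JetO at hj ⊢
  convert hj using 2 with z
  rw [SPfun_congr h]

lemma jetO_add {f g : ℂ → ℂ} {u v : PowerSeries ℂ} {n : ℕ} (hf : JetO f u n) (hg : JetO g v n) :
    JetO (fun z => f z + g z) (u + v) n := by
  have := IsBigO.add hf hg
  unfold JetO
  convert this using 2 with z
  · rfl
  simp only [SPfun, map_add, add_mul, Finset.sum_add_distrib]
  ring

lemma jetO_zero (n : ℕ) : JetO (fun _ => 0) 0 n := by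
  have : (fun z : ℂ => (0:ℂ) - SPfun 0 n z) = fun _ => 0 := by
    funext z; simp [SPfun]
  unfold JetO
  rw [this]
  exact isBigO_zero _ _

lemma SPfun_eq_eval (u : PowerSeries ℂ) (n : ℕ) (z : ℂ) :
    SPfun u n z = (u.trunc n).eval z := by
  cases n with
  | zero => simp [SPfun]
  | succ m =>
    rw [Polynomial.eval_eq_sum_range' (PowerSeries.natDegree_trunc_lt u m) z]
    refine Finset.sum_congr rfl fun k hk => ?_
    rw [PowerSeries.coeff_trunc]
    simp [Finset.mem_range.1 hk]

lemma poly_isBigO {P : Polynomial ℂ} {n : ℕ} (h : ∀ k < n, P.coeff k = 0) :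
    (fun z => P.eval z) =O[𝓝[≠] (0:ℂ)] (fun z => z ^ n) := by
  have : (fun z => P.eval z) = fun z : ℂ => ∑ k ∈ Finset.range (P.natDegree + 1), P.coeff k * z ^ k := by
    funext z; exact Polynomial.eval_eq_sum_range z
  rw [this]
  exact sum_pow_isBigO _ _ _ h

lemma JetO.mul {f g : ℂ → ℂ} {u v : PowerSeries ℂ} {n : ℕ} (hfc : ContinuousAt f 0)
    (hf : JetO f u n) (hg : JetO g v n) :
    JetO (fun z => f z * g z) (u * v) n := by
  have hfO : f =O[𝓝[≠] (0:ℂ)] (fun _ => (1:ℂ)) :=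
    (hfc.tendsto.mono_left nhdsWithin_le_nhds).isBigO_one ℂ
  have hSvc : Continuous (fun z => SPfun v n z) := by
    apply continuous_finset_sum
    exact fun k _ => continuous_const.mul (continuous_pow k)
  have hSvO : (fun z => SPfun v n z) =O[𝓝[≠] (0:ℂ)] (fun _ => (1:ℂ)) :=
    ((hSvc.tendsto 0).mono_left nhdsWithin_le_nhds).isBigO_one ℂ
  have t1 : (fun z => f z * (g z - SPfun v n z)) =O[𝓝[≠] (0:ℂ)] (fun z => z ^ n) := by
    have := hfO.mul hg
    simpa using this
  have t2 : (fun z => SPfun v n z * (f z - SPfun u n z)) =O[𝓝[≠] (0:ℂ)] (fun z => z ^ n) := by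
    have := hSvO.mul hf
    simpa using this
  have t3 : (fun z => SPfun u n z * SPfun v n z - SPfun (u * v) n z) =O[𝓝[≠] (0:ℂ)]
      (fun z => z ^ n) := by
    have he : (fun z => SPfun u n z * SPfun v n z - SPfun (u * v) n z)
        = fun z => (u.trunc n * v.trunc n - (u * v).trunc n).eval z := by
      funext z
      simp [SPfun_eq_eval]
    rw [he]
    apply poly_isBigO
    intro k hk
    rw [Polynomial.coeff_sub, PowerSeries.coeff_trunc, if_pos hk,
      PowerSeries.coeff_mul_eq_coeff_trunc_mul_trunc u v hk, ← Polynomial.coe_mul,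
      Polynomial.coeff_coe, sub_self]
  have := (t1.add t2).add t3
  unfold JetO
  convert this using 2 with z
  · rfl
  ring

lemma jetO_const (a : ℂ) (n : ℕ) : JetO (fun _ => a) (PowerSeries.C (R := ℂ) a) n := by
  cases n with
  | zero =>
    unfold JetO SPfun
    simp only [Finset.range_zero, Finset.sum_empty, sub_zero, pow_zero]
    exact isBigO_const_const a one_ne_zero _
  | succ m =>
    have : (fun z : ℂ => a - SPfun (PowerSeries.C (R := ℂ) a) (m+1) z) = fun _ => 0 := by
      funext z
      simp only [SPfun]
      rw [Finset.sum_eq_single 0 (fun k _ hk => by simp [PowerSeries.coeff_C, hk])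
        (fun h => absurd (Finset.mem_range.2 (Nat.succ_pos m)) h)]
      simp
    unfold JetO
    rw [this]
    exact isBigO_zero _ _

lemma JetO.pow {f : ℂ → ℂ} {u : PowerSeries ℂ} {n : ℕ} (hfc : ContinuousAt f 0)
    (hf : JetO f u n) : ∀ m : ℕ, JetO (fun z => f z ^ m) (u ^ m) n := by
  intro m
  induction m with
  | zero => simpa using jetO_const 1 n
  | succ m ih =>
    have e1 : (fun z => f z ^ (m+1)) = fun z => f z ^ m * f z := funext fun z => pow_succ _ _
    rw [e1, pow_succ]
    exact JetO.mul (hfc.pow m) ih hf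

lemma jetO_sum {ι : Type*} {s : Finset ι} {F : ι → ℂ → ℂ} {U : ι → PowerSeries ℂ} {n : ℕ}
    (h : ∀ j ∈ s, JetO (F j) (U j) n) :
    JetO (fun z => ∑ j ∈ s, F j z) (∑ j ∈ s, U j) n := by
  classical
  induction s using Finset.induction with
  | empty => simpa using jetO_zero n
  | @insert a s' hj ih =>
    have h1 := h a (Finset.mem_insert_self a s')
    have h2 := ih fun j hjs => h j (Finset.mem_insert_of_mem hjs)
    have := jetO_add h1 h2
    convert this using 2 with z
    · rw [Finset.sum_insert hj]
    · rw [Finset.sum_insert hj]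

lemma jetO_id (n : ℕ) : JetO (fun z => z) PowerSeries.X n := by
  match n with
  | 0 =>
    unfold JetO SPfun
    simp only [Finset.range_zero, Finset.sum_empty, sub_zero, pow_zero]
    exact (tendsto_id.mono_left nhdsWithin_le_nhds).isBigO_one ℂ
  | 1 =>
    unfold JetO SPfun
    simp only [Finset.range_one, Finset.sum_singleton, PowerSeries.coeff_X, pow_one]
    simpa using isBigO_refl (fun z : ℂ => z) _
  | (m+2) =>
    have : (fun z : ℂ => z - SPfun PowerSeries.X (m+2) z) = fun _ => 0 := by
      funext z
      simp only [SPfun]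
      rw [Finset.sum_eq_single 1 (fun k _ hk => by simp [PowerSeries.coeff_X, hk])
        (fun h => absurd (Finset.mem_range.2 (by omega)) h)]
      simp
    unfold JetO
    rw [this]
    exact isBigO_zero _ _

lemma taylorPS_coeff_eq {f : ℂ → ℂ} {s : FormalMultilinearSeries ℂ ℂ ℂ}
    (hs : HasFPowerSeriesAt f s 0) (k : ℕ) :
    s.coeff k = PowerSeries.coeff (R := ℂ) k (taylorPS f) := by
  obtain ⟨R, hR⟩ := hs
  have h := hR.factorial_smul (1 : ℂ) k
  rw [← iteratedDeriv_eq_iteratedFDeriv] at h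
  have hcoeff : s k (fun _ => (1:ℂ)) = s.coeff k := rfl
  rw [hcoeff] at h
  rw [taylorPS, PowerSeries.coeff_mk, ← h, nsmul_eq_mul]
  rw [mul_comm, mul_div_cancel_right₀ _ (show ((k.factorial : ℂ)) ≠ 0 by exact_mod_cast Nat.factorial_ne_zero k)]

lemma jet_of_analyticAt {f : ℂ → ℂ} (hf : AnalyticAt ℂ f 0) (n : ℕ) :
    JetO f (taylorPS f) n := by
  obtain ⟨s, hs⟩ := hf
  have h := (hs.isBigO_sub_partialSum_pow n).mono (nhdsWithin_le_nhds (s := {(0:ℂ)}ᶜ))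
  have h2 : (fun z : ℂ => f z - SPfun (taylorPS f) n z) =O[𝓝[≠] (0:ℂ)]
      fun y : ℂ => ‖y‖ ^ n := by
    refine h.congr_left fun z => ?_
    congr 1
    · rw [zero_add]
    · rw [FormalMultilinearSeries.partialSum, SPfun]
      refine Finset.sum_congr rfl fun k _ => ?_
      rw [FormalMultilinearSeries.apply_eq_pow_smul_coeff, taylorPS_coeff_eq hs, smul_eq_mul,
        mul_comm]
  have h3 : (fun y : ℂ => ‖y‖ ^ n) = fun y : ℂ => ‖y ^ n‖ := by
    funext y; rw [norm_pow]
  rw [h3] at h2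
  exact (isBigO_norm_right (g' := fun y : ℂ => y ^ n)).mp h2

lemma coeff_eq_of_jet_aux : ∀ (n : ℕ) (f : ℂ → ℂ) (s : FormalMultilinearSeries ℂ ℂ ℂ)
    (c : ℕ → ℂ), HasFPowerSeriesAt f s 0 →
    (fun z => f z - ∑ k ∈ Finset.range n, c k * z ^ k) =O[𝓝[≠] (0:ℂ)] (fun z => z ^ n) →
    ∀ k < n, s.coeff k = c k := by
  intro n
  induction n with
  | zero => intro f s c _ _ k hk; omega
  | succ n ih =>
    intro f s c hs hO
    have hpoly : Continuous (fun z : ℂ => ∑ k ∈ Finset.range (n+1), c k * z ^ k) :=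
      continuous_finset_sum _ fun k _ => continuous_const.mul (continuous_pow k)
    have hpoly0 : (∑ k ∈ Finset.range (n+1), c k * (0:ℂ) ^ k) = c 0 := by
      rw [Finset.sum_eq_single 0 (fun k _ hk => by simp [zero_pow hk]) (fun h => absurd
        (Finset.mem_range.2 (Nat.succ_pos n)) h)]
      simp
    have h1 : Tendsto (fun z => f z - ∑ k ∈ Finset.range (n+1), c k * z ^ k) (𝓝[≠] (0:ℂ))
        (𝓝 (f 0 - c 0)) := by
      have hf0 := (hs.continuousAt.tendsto).mono_left (nhdsWithin_le_nhds (s := {(0:ℂ)}ᶜ))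
      have hp0 := ((hpoly.tendsto 0).mono_left (nhdsWithin_le_nhds (s := {(0:ℂ)}ᶜ)))
      rw [hpoly0] at hp0
      exact hf0.sub hp0
    have h2 : Tendsto (fun z => f z - ∑ k ∈ Finset.range (n+1), c k * z ^ k) (𝓝[≠] (0:ℂ))
        (𝓝 0) := by
      refine hO.trans_tendsto ?_
      have := ((continuous_pow (n+1)).tendsto (0:ℂ)).mono_left
        (nhdsWithin_le_nhds (s := {(0:ℂ)}ᶜ))
      simpa [zero_pow (Nat.succ_ne_zero n)] using this
    have hf0c0 : f 0 = c 0 := by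
      have := tendsto_nhds_unique h1 h2
      exact sub_eq_zero.mp this
    have hdO : (fun z => dslope f 0 z - ∑ k ∈ Finset.range n, c (k+1) * z ^ k)
        =O[𝓝[≠] (0:ℂ)] (fun z => z ^ n) := by
      obtain ⟨C, hC⟩ := hO.bound
      rw [isBigO_iff]
      refine ⟨C, ?_⟩
      filter_upwards [hC, self_mem_nhdsWithin] with z hz hz0
      have hzne : z ≠ 0 := hz0
      have hsum : ∑ k ∈ Finset.range (n+1), c k * z ^ k
          = c 0 + z * ∑ k ∈ Finset.range n, c (k+1) * z ^ k := by
        rw [Finset.sum_range_succ' (fun k => c k * z ^ k) n]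
        simp only [pow_zero, mul_one]
        rw [add_comm, Finset.mul_sum]
        congr 1
        refine Finset.sum_congr rfl fun k _ => ?_
        ring
      have key : dslope f 0 z - ∑ k ∈ Finset.range n, c (k+1) * z ^ k
          = (f z - ∑ k ∈ Finset.range (n+1), c k * z ^ k) / z := by
        rw [dslope_of_ne _ hzne, slope_def_field, hsum, hf0c0]
        field_simp
        ring
      rw [key, norm_div]
      rw [div_le_iff₀ (norm_pos_iff.mpr hzne)]
      calc ‖f z - ∑ k ∈ Finset.range (n+1), c k * z ^ k‖ ≤ C * ‖z ^ (n+1)‖ := hz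
        _ = C * ‖z ^ n‖ * ‖z‖ := by rw [pow_succ, norm_mul]; ring
    have hds := hs.has_fpower_series_dslope_fslope
    have hIH := ih (dslope f 0) s.fslope (fun k => c (k+1)) hds hdO
    intro k hk
    match k with
    | 0 =>
      have := hs.coeff_zero (fun _ => (1:ℂ))
      rw [show s.coeff 0 = s 0 (fun _ => (1:ℂ)) from rfl, this, hf0c0]
    | (k+1) =>
      have := hIH k (by omega)
      rwa [FormalMultilinearSeries.coeff_fslope] at this

lemma coeff_eq_of_jet {f : ℂ → ℂ} {u : PowerSeries ℂ} {n : ℕ} (hf : AnalyticAt ℂ f 0)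
    (h : JetO f u n) : ∀ k < n, PowerSeries.coeff (R := ℂ) k (taylorPS f) = PowerSeries.coeff (R := ℂ) k u := by
  obtain ⟨s, hs⟩ := hf
  intro k hk
  rw [← taylorPS_coeff_eq hs k]
  exact coeff_eq_of_jet_aux n f s _ hs (by simpa [JetO, SPfun] using h) k hk

/-- The `p`-th coefficient of the formal composition `ψ(u(x))`, valid when
`u(0) = 0`. -/
noncomputable def onecomp (ψ u : PowerSeries ℂ) (p : ℕ) : ℂ :=
  ∑ j ∈ Finset.range (p + 1), PowerSeries.coeff (R := ℂ) j ψ * PowerSeries.coeff (R := ℂ) p (u ^ j)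

set_option maxHeartbeats 1000000 in
/-- If `β` is holomorphic and univalent near the closed disc of radius `r` with
`β(0)=0`, `β'(0)=c ≠ 0`, with holomorphic inverse `γ` on `{|z|<δ} ⊆ β({|x|<r})`,
and the formal series `α = ψ(β^ν)` is realized by a function `A` holomorphic
near the closed disc of radius `r`, then `ψ` converges on `{|t| < δ^ν}` and
`sup_{|t|<δ^ν} |ψ(t)| ≤ max_{|x|=r} |α(x)|`. -/
theorem formal_series_convergent_via_univalent_substitution
    (r δ : ℝ) (hr : 0 < r) (hδ : 0 < δ)
    (B γ A : ℂ → ℂ) (ψ : PowerSeries ℂ) (ν : ℕ) (hν : 0 < ν)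
    (hBa : ∀ x ∈ Metric.closedBall (0 : ℂ) r, AnalyticAt ℂ B x)
    (hB0 : B 0 = 0) (hc : deriv B 0 ≠ 0)
    (hinj : Set.InjOn B (Metric.closedBall (0 : ℂ) r))
    (hγa : ∀ z ∈ Metric.ball (0 : ℂ) δ, AnalyticAt ℂ γ z)
    (hγB : ∀ x ∈ Metric.closedBall (0 : ℂ) r, γ (B x) = x)
    (hBγ : ∀ z ∈ Metric.ball (0 : ℂ) δ, B (γ z) = z)
    (hδsub : Metric.ball (0 : ℂ) δ ⊆ B '' Metric.ball (0 : ℂ) r)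
    (hAa : ∀ x ∈ Metric.closedBall (0 : ℂ) r, AnalyticAt ℂ A x)
    (hAser : ∀ p : ℕ, iteratedDeriv p A 0 / (p.factorial : ℂ) =
      onecomp ψ ((taylorPS B) ^ ν) p) :
    ∀ t : ℂ, ‖t‖ < δ ^ ν →
      Summable (fun n => PowerSeries.coeff (R := ℂ) n ψ * t ^ n) ∧
      ‖∑' n : ℕ, PowerSeries.coeff (R := ℂ) n ψ * t ^ n‖ ≤
        sSup ((fun x => ‖A x‖) '' Metric.sphere (0 : ℂ) r) := by
  have h0r : (0:ℂ) ∈ Metric.closedBall (0:ℂ) r := Metric.mem_closedBall_self hr.le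
  have hγ0 : γ 0 = 0 := by have := hγB 0 h0r; rwa [hB0] at this
  have hβ0 : PowerSeries.constantCoeff (R := ℂ) (taylorPS B) = 0 := by
    have : PowerSeries.coeff (R := ℂ) 0 (taylorPS B) = 0 := by simp [taylorPS, hB0]
    rwa [PowerSeries.coeff_zero_eq_constantCoeff] at this
  have hXdvd : (PowerSeries.X : PowerSeries ℂ) ∣ taylorPS B := PowerSeries.X_dvd_iff.mpr hβ0
  have hAcoeff : ∀ p : ℕ, PowerSeries.coeff (R := ℂ) p (taylorPS A) = onecomp ψ ((taylorPS B) ^ ν) p := by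
    intro p; rw [taylorPS, PowerSeries.coeff_mk]; exact hAser p
  have hγmem : ∀ z ∈ Metric.ball (0:ℂ) δ, γ z ∈ Metric.ball (0:ℂ) r := by
    intro z hz
    obtain ⟨x, hx, hxz⟩ := hδsub hz
    rw [← hxz, hγB x (Metric.ball_subset_closedBall hx)]
    exact hx
  have h0δ : (0:ℂ) ∈ Metric.ball (0:ℂ) δ := Metric.mem_ball_self hδ
  set φ : ℂ → ℂ := fun z => A (γ z) with hφdef
  have hφa : ∀ z ∈ Metric.ball (0:ℂ) δ, AnalyticAt ℂ φ z := fun z hz =>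
    (hAa _ (Metric.ball_subset_closedBall (hγmem z hz))).comp (hγa z hz)
  have hballev : ∀ᶠ z in 𝓝[≠] (0:ℂ), z ∈ Metric.ball (0:ℂ) δ :=
    eventually_nhdsWithin_of_eventually_nhds (Metric.ball_mem_nhds (0:ℂ) hδ)
  -- γ facts
  have hγanal : AnalyticAt ℂ γ 0 := hγa 0 h0δ
  have hγO : γ =O[𝓝[≠] (0:ℂ)] (fun z : ℂ => z) := by
    have hj1 := jet_of_analyticAt hγanal 1
    unfold JetO at hj1
    refine hj1.congr (fun z => ?_) (fun z => pow_one z)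
    rw [SPfun]
    simp [taylorPS, hγ0]
  have hγtend : Tendsto γ (𝓝[≠] (0:ℂ)) (𝓝[≠] (0:ℂ)) := by
    rw [tendsto_nhdsWithin_iff]
    constructor
    · have := hγanal.continuousAt.tendsto
      rw [hγ0] at this
      exact this.mono_left nhdsWithin_le_nhds
    · filter_upwards [hballev, self_mem_nhdsWithin] with z hz hz0
      simp only [Set.mem_compl_iff, Set.mem_singleton_iff]
      intro hγz0
      apply hz0
      have hzz := hBγ z hz
      rw [hγz0, hB0] at hzz
      simp [← hzz]
  -- key coefficient claim
  have KC : ∀ p : ℕ, PowerSeries.coeff (R := ℂ) p (taylorPS φ)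
      = if ν ∣ p then PowerSeries.coeff (R := ℂ) (p / ν) ψ else 0 := by
    intro p
    have hBanal : AnalyticAt ℂ B 0 := hBa 0 h0r
    have hBc : ContinuousAt B 0 := hBanal.continuousAt
    set n := p + 1 with hn
    have jf : JetO (fun x => ∑ j ∈ Finset.range n, PowerSeries.coeff (R := ℂ) j ψ * (B x) ^ (ν * j))
        (∑ j ∈ Finset.range n,
          PowerSeries.C (R := ℂ) (PowerSeries.coeff (R := ℂ) j ψ) * (taylorPS B) ^ (ν * j)) n := by
      apply jetO_sum
      intro j _
      exact JetO.mul continuousAt_const (jetO_const _ n)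
        (JetO.pow hBc (jet_of_analyticAt hBanal n) (ν * j))
    have jg : JetO (fun z => ∑ j ∈ Finset.range n, PowerSeries.coeff (R := ℂ) j ψ * z ^ (ν * j))
        (∑ j ∈ Finset.range n,
          PowerSeries.C (R := ℂ) (PowerSeries.coeff (R := ℂ) j ψ) * (PowerSeries.X : PowerSeries ℂ) ^ (ν * j))
        n := by
      apply jetO_sum
      intro j _
      exact JetO.mul continuousAt_const (jetO_const _ n)
        (JetO.pow continuous_id.continuousAt (jetO_id n) (ν * j))
    have hvanish : ∀ (k m : ℕ), k < m → PowerSeries.coeff (R := ℂ) k ((taylorPS B) ^ m) = 0 := by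
      intro k m hkm
      have hdvd : (PowerSeries.X : PowerSeries ℂ) ^ m ∣ (taylorPS B) ^ m :=
        pow_dvd_pow_of_dvd hXdvd m
      exact (PowerSeries.X_pow_dvd_iff.mp hdvd) k hkm
    have hUA : ∀ k < n, PowerSeries.coeff (R := ℂ) k (∑ j ∈ Finset.range n,
        PowerSeries.C (R := ℂ) (PowerSeries.coeff (R := ℂ) j ψ) * (taylorPS B) ^ (ν * j))
        = PowerSeries.coeff (R := ℂ) k (taylorPS A) := by
      intro k hk
      rw [hAcoeff k, onecomp, map_sum]
      simp only [PowerSeries.coeff_C_mul]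
      rw [← Finset.sum_subset (Finset.range_subset_range.2 (show k + 1 ≤ n by omega))]
      · refine Finset.sum_congr rfl fun j _ => ?_
        rw [← pow_mul]
      · intro j hjn hj
        have hjk : k < j := by
          simp only [Finset.mem_range] at hjn hj
          omega
        have hkj : k < ν * j := lt_of_lt_of_le hjk (Nat.le_mul_of_pos_left j hν)
        rw [hvanish k (ν * j) hkj, mul_zero]
    have jA : JetO A (∑ j ∈ Finset.range n,
        PowerSeries.C (R := ℂ) (PowerSeries.coeff (R := ℂ) j ψ) * (taylorPS B) ^ (ν * j)) n :=
      (jet_of_analyticAt (hAa 0 h0r) n).congr_coeff (fun k hk => (hUA k hk).symm)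
    have hAf : (fun x => A x - ∑ j ∈ Finset.range n, PowerSeries.coeff (R := ℂ) j ψ * (B x) ^ (ν * j))
        =O[𝓝[≠] (0:ℂ)] (fun x => x ^ n) := by
      have h1 := IsBigO.sub jA jf
      exact h1.congr_left fun x => by ring
    have hcomp : (fun z => A (γ z) - ∑ j ∈ Finset.range n,
        PowerSeries.coeff (R := ℂ) j ψ * (B (γ z)) ^ (ν * j)) =O[𝓝[≠] (0:ℂ)] (fun z => z ^ n) :=
      (hAf.comp_tendsto hγtend).trans (hγO.pow n)
    have hφg : (fun z => φ z - ∑ j ∈ Finset.range n, PowerSeries.coeff (R := ℂ) j ψ * z ^ (ν * j))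
        =O[𝓝[≠] (0:ℂ)] (fun z => z ^ n) := by
      refine hcomp.congr' ?_ (Filter.EventuallyEq.refl _ _)
      filter_upwards [hballev] with z hz
      rw [hφdef]
      simp only
      congr 1
      refine Finset.sum_congr rfl fun j _ => ?_
      rw [hBγ z hz]
    have jφ : JetO φ (∑ j ∈ Finset.range n,
        PowerSeries.C (R := ℂ) (PowerSeries.coeff (R := ℂ) j ψ) * (PowerSeries.X : PowerSeries ℂ) ^ (ν * j))
        n := by
      unfold JetO
      have h1 := hφg.add jg
      exact h1.congr_left fun z => by ring
    have hkey := coeff_eq_of_jet (hφa 0 h0δ) jφ p (by omega)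
    rw [hkey, map_sum]
    simp only [PowerSeries.coeff_C_mul, PowerSeries.coeff_X_pow]
    by_cases hdvd : ν ∣ p
    · obtain ⟨m, hm⟩ := hdvd
      rw [if_pos ⟨m, hm⟩]
      rw [Finset.sum_eq_single m (fun j _ hjm => by
          rw [if_neg (fun h => hjm (Nat.eq_of_mul_eq_mul_left hν (h.symm.trans hm))), mul_zero])
        (fun hm' => absurd (Finset.mem_range.2 (by
          have : m ≤ ν * m := Nat.le_mul_of_pos_left m hν
          omega)) hm')]
      rw [if_pos hm, mul_one, hm, Nat.mul_div_cancel_left m hν]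
    · rw [if_neg hdvd]
      apply Finset.sum_eq_zero
      intro j _
      rw [if_neg (fun h => hdvd ⟨j, h⟩), mul_zero]
  -- summation part
  intro t ht
  obtain ⟨z, hz⟩ := IsAlgClosed.exists_pow_nat_eq t hν
  have hznorm : ‖z‖ < δ := by
    rw [← hz, norm_pow] at ht
    exact lt_of_pow_lt_pow_left₀ ν hδ.le ht
  obtain ⟨ρ, hρ1, hρ2⟩ := exists_between hznorm
  have hρ0 : 0 < ρ := lt_of_le_of_lt (norm_nonneg z) hρ1
  set R : NNReal := ⟨ρ, hρ0.le⟩ with hRdef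
  have hd : DifferentiableOn ℂ φ (Metric.closedBall (0:ℂ) (R : ℝ)) := by
    intro w hw
    have hwδ : w ∈ Metric.ball (0:ℂ) δ := by
      rw [Metric.mem_closedBall] at hw
      rw [Metric.mem_ball]
      exact lt_of_le_of_lt hw (by exact hρ2)
    exact (hφa w hwδ).differentiableAt.differentiableWithinAt
  have HP : HasFPowerSeriesOnBall φ (cauchyPowerSeries φ 0 R) 0 R :=
    hd.hasFPowerSeriesOnBall (NNReal.coe_pos.mp hρ0)
  have hzball : z ∈ EMetric.ball (0:ℂ) (R : ENNReal) := by
    change edist z 0 < (R : ENNReal); rw [edist_zero_right]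
    have : ‖z‖₊ < R := by rw [← NNReal.coe_lt_coe]; exact hρ1
    exact_mod_cast this
  have hsum0 := HP.hasSum hzball
  rw [zero_add] at hsum0
  have hsum1 : HasSum (fun k => PowerSeries.coeff (R := ℂ) k (taylorPS φ) * z ^ k) (φ z) := by
    have he : (fun k => (cauchyPowerSeries φ 0 R) k fun _ => z)
        = fun k => PowerSeries.coeff (R := ℂ) k (taylorPS φ) * z ^ k := by
      funext k
      rw [FormalMultilinearSeries.apply_eq_pow_smul_coeff,
        taylorPS_coeff_eq HP.hasFPowerSeriesAt k, smul_eq_mul, mul_comm]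
    rwa [he] at hsum0
  have hinjν : Function.Injective (fun m : ℕ => ν * m) :=
    fun a b h => Nat.eq_of_mul_eq_mul_left hν h
  have hvan : ∀ k ∉ Set.range (fun m : ℕ => ν * m),
      PowerSeries.coeff (R := ℂ) k (taylorPS φ) * z ^ k = 0 := by
    intro k hk
    have hndvd : ¬ ν ∣ k := fun ⟨m, hm⟩ => hk ⟨m, hm.symm⟩
    rw [KC k, if_neg hndvd, zero_mul]
  have hsum2 := (hinjν.hasSum_iff hvan).mpr hsum1
  have hsum3 : HasSum (fun m => PowerSeries.coeff (R := ℂ) m ψ * t ^ m) (φ z) := by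
    have he : ((fun k => PowerSeries.coeff (R := ℂ) k (taylorPS φ) * z ^ k) ∘ fun m => ν * m)
        = fun m => PowerSeries.coeff (R := ℂ) m ψ * t ^ m := by
      funext m
      simp only [Function.comp]
      rw [KC (ν * m), if_pos ⟨m, rfl⟩, Nat.mul_div_cancel_left m hν, ← hz, ← pow_mul]
    rwa [he] at hsum2
  refine ⟨hsum3.summable, ?_⟩
  rw [hsum3.tsum_eq]
  have hγzr : γ z ∈ Metric.ball (0:ℂ) r := hγmem z (mem_ball_zero_iff.2 hznorm)
  have hC : ∀ w ∈ frontier (Metric.ball (0:ℂ) r),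
      ‖A w‖ ≤ sSup ((fun x => ‖A x‖) '' Metric.sphere (0:ℂ) r) := by
    rw [frontier_ball 0 hr.ne']
    intro w hw
    apply le_csSup
    · apply IsCompact.bddAbove_image (isCompact_sphere (0:ℂ) r)
      exact fun x hx =>
        ((hAa x (Metric.sphere_subset_closedBall hx)).continuousAt.norm).continuousWithinAt
    · exact ⟨w, hw, rfl⟩
  have hDCC : DiffContOnCl ℂ A (Metric.ball (0:ℂ) r) := by
    constructor
    · intro w hw
      exact (hAa w (Metric.ball_subset_closedBall hw)).differentiableAt.differentiableWithinAt
    · rw [closure_ball 0 hr.ne']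
      exact fun w hw => (hAa w hw).continuousAt.continuousWithinAt
  exact Complex.norm_le_of_forall_mem_frontier_norm_le Metric.isBounded_ball hDCC hC
    (subset_closure hγzr)
end
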